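/- arXiv:2104.12019 — 4 statements merged into one kernel-verified Lean document; each statement's English description precedes it below -/
import Mathlib

section
/- Let m_1, …, m_n be nonnegative integers. If m_1 + 2m_2 + ⋯ + n·m_n ≤ n, then E[ ∏_{j=1}^n binom(C_j(σ), m_j) ] = ∏_{j=1}^n (1/j)^{m_j} / m_j!. If m_1 + 2m_2 + ⋯ + n·m_n > n, then E[ ∏_{j=1}^n binom(C_j(σ), m_j) ] = 0. -/
open Finset

/-- The number of cycles of length `j` in the permutation `σ` of `{1,…,n}`
(fixed points count as cycles of length 1): the number of points whose
orbit under `σ` has size `j`, divided by `j`. -/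
noncomputable def cycleCount {n : ℕ} (σ : Equiv.Perm (Fin n)) (j : ℕ) : ℕ :=
  (Finset.univ.filter fun x => Function.minimalPeriod (⇑σ) x = j).card / j

/-- The number of cycles of `σ` whose length lies in the set `I`. -/
noncomputable def cycleCountIn {n : ℕ} (σ : Equiv.Perm (Fin n)) (I : Finset ℕ) : ℕ :=
  ∑ j ∈ I, cycleCount σ j

/-- The total number of cycles of `σ` (fixed points included as 1-cycles). -/
noncomputable def totalCycles {n : ℕ} (σ : Equiv.Perm (Fin n)) : ℕ :=
  cycleCountIn σ (Finset.Icc 1 n)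

/-- Probability of an event under a uniformly random permutation of `{1,…,n}`. -/
noncomputable def permP (n : ℕ) (E : Equiv.Perm (Fin n) → Prop) : ℝ :=
  (Nat.card {σ : Equiv.Perm (Fin n) // E σ} : ℝ) / n.factorial

/-- Expectation of `f` under a uniformly random permutation of `{1,…,n}`. -/
noncomputable def permE (n : ℕ) (f : Equiv.Perm (Fin n) → ℝ) : ℝ :=
  (∑ σ : Equiv.Perm (Fin n), f σ) / n.factorial

/-- `H(I) = ∑_{j ∈ I} 1/j`. -/
noncomputable def Hset (I : Finset ℕ) : ℝ := ∑ j ∈ I, (1 : ℝ) / j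

/-- The harmonic sum `H_n = ∑_{i=1}^n 1/i`. -/
noncomputable def harm (n : ℕ) : ℝ := Hset (Finset.Icc 1 n)

section Basics
open Function Equiv

variable {n : ℕ} (σ : Equiv.Perm (Fin n))

lemma perm_mem_periodicPts (x : Fin n) : x ∈ periodicPts ⇑σ := by
  refine ⟨orderOf σ, orderOf_pos σ, ?_⟩
  show (⇑σ)^[orderOf σ] x = x
  rw [← Equiv.Perm.coe_pow, pow_orderOf_eq_one]
  rfl

lemma minP_pos (x : Fin n) : 0 < minimalPeriod ⇑σ x :=
  minimalPeriod_pos_of_mem_periodicPts (perm_mem_periodicPts σ x)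

lemma pow_mod_minP (x : Fin n) (i : ℕ) :
    (σ ^ (i % minimalPeriod ⇑σ x)) x = (σ ^ i) x := by
  rw [Equiv.Perm.coe_pow, Equiv.Perm.coe_pow]
  exact iterate_mod_minimalPeriod_eq

lemma sameCycle_iff {x y : Fin n} :
    σ.SameCycle x y ↔ ∃ i < minimalPeriod ⇑σ x, (σ ^ i) x = y := by
  constructor
  · intro h
    obtain ⟨i, -, hi⟩ := h.exists_pow_eq'
    exact ⟨i % minimalPeriod ⇑σ x, Nat.mod_lt _ (minP_pos σ x),
      by rw [pow_mod_minP]; exact hi⟩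
  · rintro ⟨i, -, rfl⟩
    exact ⟨(i : ℤ), by rw [zpow_natCast]⟩

noncomputable def orbitF (x : Fin n) : Finset (Fin n) :=
  @Finset.filter _ (fun y => σ.SameCycle x y) (Classical.decPred _) Finset.univ

lemma mem_orbitF {x y : Fin n} : y ∈ orbitF σ x ↔ σ.SameCycle x y := by
  simp [orbitF]

lemma orbitF_eq (x : Fin n) :
    orbitF σ x = (Finset.range (minimalPeriod ⇑σ x)).image (fun i => (σ ^ i) x) := by
  ext y
  simp only [mem_orbitF, sameCycle_iff σ, Finset.mem_image, Finset.mem_range]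

lemma card_orbitF (x : Fin n) : (orbitF σ x).card = minimalPeriod ⇑σ x := by
  rw [orbitF_eq, Finset.card_image_of_injOn, Finset.card_range]
  intro a ha b hb hab
  simp only [Finset.coe_range, Set.mem_Iio] at ha hb
  exact iterate_injOn_Iio_minimalPeriod ha hb
    (by simpa only [Equiv.Perm.coe_pow] using hab)

lemma sameCycle_minP {x y : Fin n} (h : σ.SameCycle x y) :
    minimalPeriod ⇑σ y = minimalPeriod ⇑σ x := by
  obtain ⟨i, -, rfl⟩ := (sameCycle_iff σ).1 h
  rw [Equiv.Perm.coe_pow]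
  exact minimalPeriod_apply_iterate (perm_mem_periodicPts σ x) i

lemma minP_le (x : Fin n) : minimalPeriod ⇑σ x ≤ n := by
  have h := Finset.card_le_univ (orbitF σ x)
  rw [card_orbitF] at h
  simpa using h

noncomputable def SjF (j : ℕ) : Finset (Fin n) := Finset.univ.filter fun x => minimalPeriod ⇑σ x = j

lemma mem_SjF {j : ℕ} {x : Fin n} : x ∈ SjF σ j ↔ minimalPeriod ⇑σ x = j := by
  simp [SjF]

lemma orbitF_subset_SjF {j : ℕ} {x : Fin n} (hx : x ∈ SjF σ j) : orbitF σ x ⊆ SjF σ j := by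
  intro y hy
  rw [mem_SjF] at hx ⊢
  rw [sameCycle_minP σ (mem_orbitF σ |>.1 hy), hx]

lemma j_dvd_card {j : ℕ} (T : Finset (Fin n)) (hm : ∀ x ∈ T, minimalPeriod ⇑σ x = j)
    (hc : ∀ x ∈ T, ∀ y, σ.SameCycle x y → y ∈ T) : j ∣ T.card := by
  induction T using Finset.strongInduction with
  | _ T ih =>
    rcases T.eq_empty_or_nonempty with rfl | ⟨x, hx⟩
    · simp
    · have hOsub : orbitF σ x ⊆ T := fun y hy => hc x hx y ((mem_orbitF σ).1 hy)
      have hxO : x ∈ orbitF σ x := (mem_orbitF σ).2 (Equiv.Perm.SameCycle.refl σ x)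
      have hcard : (orbitF σ x).card = j := by rw [card_orbitF]; exact hm x hx
      have hssub : T \ orbitF σ x ⊂ T := Finset.sdiff_ssubset hOsub ⟨x, hxO⟩
      have hdvd : j ∣ (T \ orbitF σ x).card := by
        refine ih _ hssub (fun y hy => hm y (Finset.mem_sdiff.1 hy).1) ?_
        intro y hy z hz
        obtain ⟨hyT, hyO⟩ := Finset.mem_sdiff.1 hy
        refine Finset.mem_sdiff.2 ⟨hc y hyT z hz, fun hzO => hyO ?_⟩
        exact (mem_orbitF σ).2 (((mem_orbitF σ).1 hzO).trans hz.symm)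
      have hle : j ≤ T.card := hcard ▸ Finset.card_le_card hOsub
      have : T.card = (T \ orbitF σ x).card + j := by
        rw [Finset.card_sdiff_of_subset hOsub, hcard, Nat.sub_add_cancel hle]
      rw [this]
      exact Nat.dvd_add hdvd dvd_rfl

lemma card_SjF (j : ℕ) : (SjF σ j).card = j * cycleCount σ j := by
  have hdvd : j ∣ (SjF σ j).card :=
    j_dvd_card σ _ (fun x hx => (mem_SjF σ).1 hx)
      (fun x hx y hy => orbitF_subset_SjF σ hx ((mem_orbitF σ).2 hy))
  rw [cycleCount]
  exact (Nat.mul_div_cancel' hdvd).symm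

lemma sum_card_SjF : ∑ j ∈ Finset.Icc 1 n, (SjF σ j).card = n := by
  have := Finset.card_eq_sum_card_fiberwise
    (f := fun x : Fin n => minimalPeriod ⇑σ x) (s := Finset.univ) (t := Finset.Icc 1 n)
    (fun x _ => Finset.mem_Icc.2 ⟨minP_pos σ x, minP_le σ x⟩)
  simp only [Finset.card_univ, Fintype.card_fin] at this
  exact (by simpa [SjF] using this.symm : _)

lemma sum_j_cycleCount : ∑ j ∈ Finset.Icc 1 n, j * cycleCount σ j = n := by
  conv_rhs => rw [← sum_card_SjF σ]
  exact Finset.sum_congr rfl fun j _ => (card_SjF σ j).symm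

end Basics

section PerJ
open Function Equiv

variable {n : ℕ} (σ : Equiv.Perm (Fin n))

lemma orbitF_disjoint {x y : Fin n} (h : ¬ σ.SameCycle x y) :
    Disjoint (orbitF σ x) (orbitF σ y) := by
  rw [Finset.disjoint_left]
  intro z hzx hzy
  exact h (((mem_orbitF σ).1 hzx).trans ((mem_orbitF σ).1 hzy).symm)

lemma card_completion {j M : ℕ} (h : Fin M → Fin n)
    (hP : ∀ b, minimalPeriod ⇑σ (h b) = j)
    (hD : ∀ b b', b ≠ b' → ¬σ.SameCycle (h b) (h b')) :
    Nat.card {x : Fin n // minimalPeriod ⇑σ x = j ∧ ∀ b, ¬σ.SameCycle (h b) x}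
      = (SjF σ j).card - M * j := by
  classical
  rw [Nat.card_eq_fintype_card, Fintype.card_subtype]
  have heq : Finset.univ.filter
        (fun x => minimalPeriod ⇑σ x = j ∧ ∀ b, ¬σ.SameCycle (h b) x)
      = SjF σ j \ Finset.univ.biUnion (fun b => orbitF σ (h b)) := by
    ext x
    simp only [Finset.mem_filter, Finset.mem_univ, true_and, Finset.mem_sdiff, mem_SjF,
      Finset.mem_biUnion, mem_orbitF, not_exists]

  rw [heq, Finset.card_sdiff_of_subset, Finset.card_biUnion]
  · have : ∀ b : Fin M, (orbitF σ (h b)).card = j := fun b => by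
      rw [card_orbitF, hP]
    rw [Finset.sum_congr rfl fun b _ => this b, Finset.sum_const, Finset.card_univ,
      Fintype.card_fin, smul_eq_mul]
  · intro b _ b' _ hbb'
    exact orbitF_disjoint σ (hD b b' hbb')
  · intro x hx
    obtain ⟨b, -, hb⟩ := Finset.mem_biUnion.1 hx
    exact orbitF_subset_SjF σ ((mem_SjF σ).2 (hP b)) hb

def ValidP {n : ℕ} (σ : Equiv.Perm (Fin n)) (j M : ℕ) (g : Fin M → Fin n) : Prop :=
  (∀ b, Function.minimalPeriod ⇑σ (g b) = j) ∧
  (∀ b b', b ≠ b' → ¬σ.SameCycle (g b) (g b'))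

lemma card_valid (j : ℕ) : ∀ M : ℕ,
    Nat.card {g : Fin M → Fin n // ValidP σ j M g}
      = j ^ M * (cycleCount σ j).descFactorial M := by
  intro M
  induction M with
  | zero =>
    rw [pow_zero, Nat.descFactorial_zero, mul_one]
    have : ∀ g : Fin 0 → Fin n, ValidP σ j 0 g :=
      fun g => ⟨fun b => b.elim0, fun b => b.elim0⟩
    rw [Nat.card_congr (Equiv.subtypeUnivEquiv this), Nat.card_eq_fintype_card]
    simp
  | succ M ih =>
    classical
    have hcons : ∀ g : Fin (M+1) → Fin n,
        (Fin.cons (g 0) (fun i => g i.succ) : Fin (M+1) → Fin n) = g := fun g =>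
      funext fun b => Fin.cases (Fin.cons_zero _ _) (fun i => Fin.cons_succ _ _ _) b
    have e1 : {g : Fin (M+1) → Fin n // ValidP σ j (M+1) g} ≃
        {q : Fin n × (Fin M → Fin n) // ValidP σ j (M+1) (Fin.cons q.1 q.2)} :=
      ((Fin.consEquiv (fun _ : Fin (M+1) => Fin n)).subtypeEquiv (fun q => Iff.rfl)).symm
    have e2 : {q : Fin n × (Fin M → Fin n) // ValidP σ j (M+1) (Fin.cons q.1 q.2)} ≃
        {q : (Fin M → Fin n) × Fin n // ValidP σ j (M+1) (Fin.cons q.2 q.1)} :=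
      (Equiv.prodComm _ _).subtypeEquiv (fun q => Iff.rfl)
    have e3 : {q : (Fin M → Fin n) × Fin n // ValidP σ j (M+1) (Fin.cons q.2 q.1)} ≃
        Σ h : Fin M → Fin n, {x : Fin n // ValidP σ j (M+1) (Fin.cons x h)} :=
      Equiv.subtypeProdEquivSigmaSubtype
        (fun (h : Fin M → Fin n) (x : Fin n) => ValidP σ j (M+1) (Fin.cons x h))
    rw [Nat.card_congr ((e1.trans e2).trans e3), Nat.card_eq_fintype_card,
      Fintype.card_sigma]
    have hterm : ∀ h : Fin M → Fin n,
        Fintype.card {x : Fin n // ValidP σ j (M+1) (Fin.cons x h)}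
          = if ValidP σ j M h then j * cycleCount σ j - M * j else 0 := by
      intro h
      by_cases hh : ValidP σ j M h
      · rw [if_pos hh]
        have hiff : ∀ x : Fin n, ValidP σ j (M+1) (Fin.cons x h) ↔
            (Function.minimalPeriod ⇑σ x = j ∧ ∀ b, ¬σ.SameCycle (h b) x) := by
          intro x
          constructor
          · intro hP
            refine ⟨by simpa using hP.1 0, fun b => ?_⟩
            have := hP.2 b.succ 0 (Fin.succ_ne_zero b)
            simpa using this
          · rintro ⟨hx, hsc⟩
            constructor
            · intro b
              rcases Fin.eq_zero_or_eq_succ b with rfl | ⟨i, rfl⟩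
              · simpa using hx
              · simpa using hh.1 i
            · intro b b' hbb'
              rcases Fin.eq_zero_or_eq_succ b with rfl | ⟨i, rfl⟩ <;>
                rcases Fin.eq_zero_or_eq_succ b' with rfl | ⟨i', rfl⟩
              · exact absurd rfl hbb'
              · simpa using fun hs => hsc i' hs.symm
              · simpa using hsc i
              · simpa using hh.2 i i' (fun e => hbb' (by rw [e]))
        rw [Fintype.card_congr (Equiv.subtypeEquivRight hiff), ← Nat.card_eq_fintype_card,
          card_completion σ h hh.1 hh.2, card_SjF]
      · rw [if_neg hh, Fintype.card_eq_zero_iff]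
        refine ⟨fun x => hh ?_⟩
        obtain ⟨x, hP⟩ := x
        constructor
        · intro b
          simpa using hP.1 b.succ
        · intro b b' hbb'
          have := hP.2 b.succ b'.succ (fun e => hbb' (Fin.succ_injective _ e))
          simpa using this
    rw [Finset.sum_congr rfl fun h _ => hterm h, ← Finset.sum_filter,
      Finset.sum_const, smul_eq_mul]
    have hfc : (Finset.univ.filter (ValidP σ j M)).card
        = Nat.card {g : Fin M → Fin n // ValidP σ j M g} := by
      rw [Nat.card_eq_fintype_card, Fintype.card_subtype]
    rw [hfc, ih, Nat.descFactorial_succ]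
    have hsub : j * cycleCount σ j - M * j = j * (cycleCount σ j - M) := by
      rw [Nat.mul_sub]; ring_nf
    rw [hsub, pow_succ]
    ring

end PerJ

section Global
open Function Equiv

lemma finRotate_val : ∀ {N : ℕ} (i : Fin N), ((finRotate N) i).val = (i.val + 1) % N := by
  intro N i
  match N with
  | 0 => exact i.elim0
  | N+1 =>
    rw [finRotate_succ_apply, Fin.add_def]
    simp [Nat.add_mod]

variable (n : ℕ) (m : ℕ → ℕ)

abbrev Dtype := Σ j : {j : ℕ // j ∈ Finset.Icc 1 n}, Fin (m j.1) × Fin j.1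

lemma jpos (j : {j : ℕ // j ∈ Finset.Icc 1 n}) : 0 < j.1 := (Finset.mem_Icc.1 j.2).1

def shiftD : Equiv.Perm (Dtype n m) :=
  Equiv.sigmaCongrRight fun j => Equiv.prodCongr (Equiv.refl _) (finRotate j.1)

lemma shiftD_apply (j : {j : ℕ // j ∈ Finset.Icc 1 n}) (b : Fin (m j.1)) (i : Fin j.1) :
    shiftD n m ⟨j, b, i⟩ = ⟨j, b, finRotate j.1 i⟩ := rfl

lemma card_Dtype : Fintype.card (Dtype n m) = ∑ j ∈ Finset.Icc 1 n, j * m j := by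
  rw [Fintype.card_sigma, ← Finset.sum_coe_sort (Finset.Icc 1 n) (fun j => j * m j)]
  exact Finset.sum_congr rfl fun j _ => by simp [mul_comm]

variable {n m} {σ : Equiv.Perm (Fin n)}

def GoodF (σ : Equiv.Perm (Fin n)) (f : Dtype n m → Fin n) : Prop :=
  Function.Injective f ∧ ∀ d, σ (f d) = f (shiftD n m d)

lemma Dmk_inj {j : {j : ℕ // j ∈ Finset.Icc 1 n}} {b b' : Fin (m j.1)} {i i' : Fin j.1}
    (h : (⟨j, b, i⟩ : Dtype n m) = ⟨j, b', i'⟩) : b = b' ∧ i = i' := by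
  have h2 : (b, i) = (b', i') := by
    injection h with h1 h2
  exact ⟨congrArg Prod.fst h2, congrArg Prod.snd h2⟩

/-- iteration lemma -/
lemma goodF_iter {f : Dtype n m → Fin n} (hf : GoodF σ f)
    (j : {j : ℕ // j ∈ Finset.Icc 1 n}) (b : Fin (m j.1)) :
    ∀ t (ht : t < j.1), f ⟨j, b, ⟨t, ht⟩⟩ = (σ ^ t) (f ⟨j, b, ⟨0, jpos n j⟩⟩) := by
  intro t
  induction t with
  | zero => intro ht; simp
  | succ t ihh =>
    intro ht
    have ht' : t < j.1 := Nat.lt_of_succ_lt ht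
    have hrot : shiftD n m ⟨j, b, ⟨t, ht'⟩⟩ = ⟨j, b, ⟨t+1, ht⟩⟩ := by
      rw [shiftD_apply]
      congr 1
      · congr 1
        apply Fin.ext
        rw [finRotate_val]
        exact Nat.mod_eq_of_lt ht
    have := hf.2 ⟨j, b, ⟨t, ht'⟩⟩
    rw [hrot] at this
    rw [← this, ihh ht', ← Equiv.Perm.mul_apply, ← pow_succ']

lemma goodF_period {f : Dtype n m → Fin n} (hf : GoodF σ f)
    (j : {j : ℕ // j ∈ Finset.Icc 1 n}) (b : Fin (m j.1)) :
    (σ ^ j.1) (f ⟨j, b, ⟨0, jpos n j⟩⟩) = f ⟨j, b, ⟨0, jpos n j⟩⟩ := by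
  have hj := jpos n j
  have hlt : j.1 - 1 < j.1 := Nat.sub_lt hj one_pos
  have hrot : shiftD n m ⟨j, b, ⟨j.1 - 1, hlt⟩⟩ = ⟨j, b, ⟨0, hj⟩⟩ := by
    rw [shiftD_apply]
    congr 1
    congr 1
    apply Fin.ext
    rw [finRotate_val]
    simp [Nat.sub_add_cancel hj]
  have := hf.2 ⟨j, b, ⟨j.1 - 1, hlt⟩⟩
  rw [hrot, goodF_iter hf j b _ hlt] at this
  calc (σ ^ j.1) (f ⟨j, b, ⟨0, hj⟩⟩)
      = (σ ^ (j.1 - 1 + 1)) (f ⟨j, b, ⟨0, hj⟩⟩) := by rw [Nat.sub_add_cancel hj]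
    _ = σ ((σ ^ (j.1 - 1)) (f ⟨j, b, ⟨0, hj⟩⟩)) := by
        rw [pow_succ', Equiv.Perm.mul_apply]
    _ = _ := this

lemma goodF_minP {f : Dtype n m → Fin n} (hf : GoodF σ f)
    (j : {j : ℕ // j ∈ Finset.Icc 1 n}) (b : Fin (m j.1)) :
    minimalPeriod ⇑σ (f ⟨j, b, ⟨0, jpos n j⟩⟩) = j.1 := by
  have hper : IsPeriodicPt ⇑σ j.1 (f ⟨j, b, ⟨0, jpos n j⟩⟩) := by
    show (⇑σ)^[j.1] _ = _
    rw [← Equiv.Perm.coe_pow]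
    exact goodF_period hf j b
  have hle : minimalPeriod ⇑σ (f ⟨j, b, ⟨0, jpos n j⟩⟩) ≤ j.1 :=
    hper.minimalPeriod_le (jpos n j)
  rcases Nat.lt_or_ge (minimalPeriod ⇑σ (f ⟨j, b, ⟨0, jpos n j⟩⟩)) j.1 with hlt | hge
  · exfalso
    have h1 : f ⟨j, b, ⟨minimalPeriod ⇑σ (f ⟨j, b, ⟨0, jpos n j⟩⟩), hlt⟩⟩
        = f ⟨j, b, ⟨0, jpos n j⟩⟩ := by
      rw [goodF_iter hf j b _ hlt, Equiv.Perm.coe_pow]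
      exact iterate_minimalPeriod
    have := (Dmk_inj (hf.1 h1)).2
    have h0 : minimalPeriod ⇑σ (f ⟨j, b, ⟨0, jpos n j⟩⟩) = 0 := by
      simpa [Fin.ext_iff] using this
    exact (minP_pos σ _).ne' h0
  · omega

lemma goodF_valid {f : Dtype n m → Fin n} (hf : GoodF σ f)
    (j : {j : ℕ // j ∈ Finset.Icc 1 n}) :
    ValidP σ j.1 (m j.1) (fun b => f ⟨j, b, ⟨0, jpos n j⟩⟩) := by
  refine ⟨fun b => goodF_minP hf j b, ?_⟩
  intro b b' hbb' hsc
  rw [sameCycle_iff σ] at hsc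
  obtain ⟨t, htlt, ht⟩ := hsc
  rw [goodF_minP hf j b] at htlt
  have h1 : f ⟨j, b, ⟨t, htlt⟩⟩ = f ⟨j, b', ⟨0, jpos n j⟩⟩ := by
    rw [goodF_iter hf j b _ htlt, ht]
  exact hbb' (Dmk_inj (hf.1 h1)).1

/-- the backward map is good -/
lemma backward_good {g : ∀ j : {j : ℕ // j ∈ Finset.Icc 1 n}, Fin (m j.1) → Fin n}
    (hg : ∀ j, ValidP σ j.1 (m j.1) (g j)) :
    GoodF σ (fun d : Dtype n m => (σ ^ (d.2.2.1 : ℕ)) (g d.1 d.2.1)) := by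
  constructor
  · rintro ⟨j, b, i⟩ ⟨j', b', i'⟩ hd
    simp only at hd
    have hsc : σ.SameCycle (g j b) (g j' b') := by
      refine Equiv.Perm.SameCycle.trans ⟨(i.1 : ℤ), by rw [zpow_natCast]⟩ ?_
      rw [hd]
      exact Equiv.Perm.SameCycle.symm ⟨(i'.1 : ℤ), by rw [zpow_natCast]⟩
    have hjj' : j = j' := by
      apply Subtype.ext
      rw [← (hg j).1 b, ← (hg j').1 b']
      exact (sameCycle_minP σ hsc).symm
    subst hjj'
    have hbb' : b = b' := by
      by_contra hne
      exact (hg j).2 b b' hne hsc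
    subst hbb'
    have hii' : i = i' := by
      apply Fin.ext
      have h1 : (⇑σ)^[i.1] (g j b) = (⇑σ)^[i'.1] (g j b) := by
        simpa only [Equiv.Perm.coe_pow] using hd
      have hip : i.1 < minimalPeriod ⇑σ (g j b) := by rw [(hg j).1 b]; exact i.2
      have hip' : i'.1 < minimalPeriod ⇑σ (g j b) := by rw [(hg j).1 b]; exact i'.2
      exact iterate_injOn_Iio_minimalPeriod hip hip' h1
    subst hii'
    rfl
  · rintro ⟨j, b, i⟩
    rw [shiftD_apply]
    simp only
    have hmin : minimalPeriod ⇑σ (g j b) = j.1 := (hg j).1 b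
    have := pow_mod_minP σ (g j b) (i.1 + 1)
    rw [hmin] at this
    have hval : ((finRotate j.1 i : Fin j.1) : ℕ) = (i.1 + 1) % j.1 := finRotate_val i
    rw [hval, this, pow_succ', Equiv.Perm.mul_apply]

noncomputable def goodEquiv (σ : Equiv.Perm (Fin n)) :
    {f : Dtype n m → Fin n // GoodF σ f} ≃
    {g : ∀ j : {j : ℕ // j ∈ Finset.Icc 1 n}, Fin (m j.1) → Fin n //
      ∀ j, ValidP σ j.1 (m j.1) (g j)} where
  toFun f := ⟨fun j b => f.1 ⟨j, b, ⟨0, jpos n j⟩⟩, fun j => goodF_valid f.2 j⟩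
  invFun g := ⟨fun d => (σ ^ (d.2.2.1 : ℕ)) (g.1 d.1 d.2.1), backward_good g.2⟩
  left_inv f := by
    apply Subtype.ext
    funext d
    obtain ⟨j, b, i⟩ := d
    simp only
    rw [← goodF_iter f.2 j b i.1 i.2]
  right_inv g := by
    apply Subtype.ext
    funext j b
    simp

lemma card_goodF (σ : Equiv.Perm (Fin n)) :
    Nat.card {f : Dtype n m → Fin n // GoodF σ f}
      = ∏ j ∈ Finset.Icc 1 n, (j ^ (m j) * (cycleCount σ j).descFactorial (m j)) := by
  rw [Nat.card_congr (goodEquiv σ), Nat.card_congr (Equiv.subtypePiEquivPi), Nat.card_pi]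
  rw [← Finset.prod_coe_sort (Finset.Icc 1 n)
    (fun j => j ^ (m j) * (cycleCount σ j).descFactorial (m j))]
  exact Finset.prod_congr rfl fun j _ => card_valid σ j.1 (m j.1)

end Global

section PerF
open Function Equiv

variable {n : ℕ} {m : ℕ → ℕ}

lemma card_perm_fiber (f : Dtype n m → Fin n) (hf : Function.Injective f) :
    Nat.card {σ : Equiv.Perm (Fin n) // ∀ d, σ (f d) = f (shiftD n m d)}
      = (n - ∑ j ∈ Finset.Icc 1 n, j * m j).factorial := by
  classical
  let p : Fin n → Prop := fun x => x ∈ Set.range f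
  let ef : Dtype n m ≃ Subtype p := Equiv.ofInjective f hf
  let σ₀ : Equiv.Perm (Fin n) := (shiftD n m).extendDomain ef
  have hσ₀ : ∀ d, σ₀ (f d) = f (shiftD n m d) := fun d =>
    Equiv.Perm.extendDomain_apply_image (shiftD n m) ef d
  have E1 : {σ : Equiv.Perm (Fin n) // ∀ d, σ (f d) = f (shiftD n m d)} ≃
      {π : Equiv.Perm (Fin n) // ∀ x, p x → π x = x} := by
    refine ⟨fun σ => ⟨σ₀⁻¹ * σ.1, ?_⟩, fun π => ⟨σ₀ * π.1, ?_⟩, ?_, ?_⟩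
    · rintro x ⟨d, rfl⟩
      rw [Equiv.Perm.mul_apply, σ.2 d, ← hσ₀ d, ← Equiv.Perm.mul_apply, inv_mul_cancel, Equiv.Perm.one_apply]
    · intro d
      rw [Equiv.Perm.mul_apply, π.2 (f d) ⟨d, rfl⟩, hσ₀ d]
    · intro σ
      apply Subtype.ext
      simp [mul_assoc]
    · intro π
      apply Subtype.ext
      simp [← mul_assoc]
  have E2 : {π : Equiv.Perm (Fin n) // ∀ x, p x → π x = x} ≃
      {π : Equiv.Perm (Fin n) // ∀ x, ¬¬ p x → π x = x} :=
    Equiv.subtypeEquivRight (fun π => by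
      constructor
      · intro h x hx; exact h x (not_not.1 hx)
      · intro h x hx; exact h x (not_not.2 hx))
  have E3 : Equiv.Perm {x : Fin n // ¬ p x} ≃
      {π : Equiv.Perm (Fin n) // ∀ x, ¬¬ p x → π x = x} :=
    Equiv.Perm.subtypeEquivSubtypePerm (fun x => ¬ p x)
  rw [Nat.card_congr ((E1.trans E2).trans E3.symm), Nat.card_eq_fintype_card,
    Fintype.card_perm]
  congr 1
  have : Fintype.card {x : Fin n // ¬ p x} = n - Fintype.card {x : Fin n // p x} := by
    rw [Fintype.card_subtype_compl, Fintype.card_fin]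
  rw [this, Fintype.card_congr ef.symm, card_Dtype]

lemma card_perm_fiber_goodF (f : Dtype n m → Fin n) :
    Nat.card {σ : Equiv.Perm (Fin n) // GoodF σ f}
      = if Function.Injective f then (n - ∑ j ∈ Finset.Icc 1 n, j * m j).factorial else 0 := by
  by_cases hf : Function.Injective f
  · rw [if_pos hf, ← card_perm_fiber f hf]
    exact Nat.card_congr (Equiv.subtypeEquivRight (fun σ => by
      constructor
      · exact fun h => h.2
      · exact fun h => ⟨hf, h⟩))
  · rw [if_neg hf]
    have : IsEmpty {σ : Equiv.Perm (Fin n) // GoodF σ f} :=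
      ⟨fun σ => hf σ.2.1⟩
    exact Nat.card_of_isEmpty

lemma card_inj_fns : (Finset.univ.filter
      (fun f : Dtype n m → Fin n => Function.Injective f)).card
    = n.descFactorial (∑ j ∈ Finset.Icc 1 n, j * m j) := by
  classical
  rw [← Fintype.card_subtype]
  rw [Fintype.card_congr (Equiv.subtypeInjectiveEquivEmbedding (Dtype n m) (Fin n))]
  rw [Fintype.card_embedding_eq, Fintype.card_fin, card_Dtype]

lemma main_count :
    ∑ σ : Equiv.Perm (Fin n),
      ∏ j ∈ Finset.Icc 1 n, (j ^ m j * (cycleCount σ j).descFactorial (m j))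
    = n.descFactorial (∑ j ∈ Finset.Icc 1 n, j * m j)
      * (n - ∑ j ∈ Finset.Icc 1 n, j * m j).factorial := by
  classical
  have eqA : Nat.card {q : Equiv.Perm (Fin n) × (Dtype n m → Fin n) // GoodF q.1 q.2}
      = ∑ σ : Equiv.Perm (Fin n),
        ∏ j ∈ Finset.Icc 1 n, (j ^ m j * (cycleCount σ j).descFactorial (m j)) := by
    rw [Nat.card_congr (Equiv.subtypeProdEquivSigmaSubtype
      (fun (σ : Equiv.Perm (Fin n)) (f : Dtype n m → Fin n) => GoodF σ f)),
      Nat.card_eq_fintype_card, Fintype.card_sigma]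
    exact Finset.sum_congr rfl fun σ _ => by
      rw [← Nat.card_eq_fintype_card, card_goodF σ]
  have eqB : Nat.card {q : Equiv.Perm (Fin n) × (Dtype n m → Fin n) // GoodF q.1 q.2}
      = n.descFactorial (∑ j ∈ Finset.Icc 1 n, j * m j)
        * (n - ∑ j ∈ Finset.Icc 1 n, j * m j).factorial := by
    have e0 : {q : Equiv.Perm (Fin n) × (Dtype n m → Fin n) // GoodF q.1 q.2} ≃
        {q : (Dtype n m → Fin n) × Equiv.Perm (Fin n) // GoodF q.2 q.1} :=
      (Equiv.prodComm _ _).subtypeEquiv (fun q => Iff.rfl)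
    rw [Nat.card_congr (e0.trans (Equiv.subtypeProdEquivSigmaSubtype
      (fun (f : Dtype n m → Fin n) (σ : Equiv.Perm (Fin n)) => GoodF σ f))),
      Nat.card_eq_fintype_card, Fintype.card_sigma]
    have : ∀ f : Dtype n m → Fin n, Fintype.card {σ : Equiv.Perm (Fin n) // GoodF σ f}
        = if Function.Injective f then
            (n - ∑ j ∈ Finset.Icc 1 n, j * m j).factorial else 0 := fun f => by
      rw [← Nat.card_eq_fintype_card, card_perm_fiber_goodF f]
    rw [Finset.sum_congr rfl fun f _ => this f, ← Finset.sum_filter, Finset.sum_const,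
      smul_eq_mul, card_inj_fns]
  rw [← eqA, eqB]

end PerF

/-- **Watterson's lemma.** If `m₁ + 2m₂ + ⋯ + n·mₙ ≤ n` then
`E ∏_{j=1}^n binom(C_j(σ), m_j) = ∏_{j=1}^n (1/j)^{m_j}/m_j!`, and if
`m₁ + 2m₂ + ⋯ + n·mₙ > n` then this expectation is `0`. -/
theorem binomial_moments_single_lengths (n : ℕ) (m : ℕ → ℕ) :
    (∑ j ∈ Finset.Icc 1 n, j * m j ≤ n →
      permE n (fun σ => ∏ j ∈ Finset.Icc 1 n, ((cycleCount σ j).choose (m j) : ℝ))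
        = ∏ j ∈ Finset.Icc 1 n, (1 / (j : ℝ)) ^ m j / (m j).factorial) ∧
    (n < ∑ j ∈ Finset.Icc 1 n, j * m j →
      permE n (fun σ => ∏ j ∈ Finset.Icc 1 n, ((cycleCount σ j).choose (m j) : ℝ))
        = 0) := by
  set k := ∑ j ∈ Finset.Icc 1 n, j * m j with hk
  constructor
  · -- main case
    intro hkn
    set W : ℕ := ∏ j ∈ Finset.Icc 1 n, (j ^ m j * (m j).factorial) with hW
    have hWpos : 0 < W := by
      refine Finset.prod_pos fun j hj => ?_
      have hj1 : 1 ≤ j := (Finset.mem_Icc.1 hj).1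
      exact Nat.mul_pos (Nat.pow_pos hj1) (Nat.factorial_pos _)
    have step1 : ∀ σ : Equiv.Perm (Fin n),
        ∏ j ∈ Finset.Icc 1 n, (j ^ m j * (cycleCount σ j).descFactorial (m j))
          = (∏ j ∈ Finset.Icc 1 n, (cycleCount σ j).choose (m j)) * W := by
      intro σ
      rw [hW, ← Finset.prod_mul_distrib]
      refine Finset.prod_congr rfl fun j _ => ?_
      rw [Nat.descFactorial_eq_factorial_mul_choose]
      ring
    have hNat : (∑ σ : Equiv.Perm (Fin n),
        ∏ j ∈ Finset.Icc 1 n, (cycleCount σ j).choose (m j)) * W = n.factorial := by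
      rw [Finset.sum_mul]
      calc ∑ σ : Equiv.Perm (Fin n),
            (∏ j ∈ Finset.Icc 1 n, (cycleCount σ j).choose (m j)) * W
          = ∑ σ : Equiv.Perm (Fin n),
            ∏ j ∈ Finset.Icc 1 n, (j ^ m j * (cycleCount σ j).descFactorial (m j)) :=
            Finset.sum_congr rfl fun σ _ => (step1 σ).symm
        _ = n.descFactorial k * (n - k).factorial := main_count
        _ = n.factorial := by
            rw [mul_comm]
            exact Nat.factorial_mul_descFactorial hkn
    have hReal : (∑ σ : Equiv.Perm (Fin n),
        ∏ j ∈ Finset.Icc 1 n, ((cycleCount σ j).choose (m j) : ℝ)) * (W : ℝ)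
          = (n.factorial : ℝ) := by
      exact_mod_cast hNat
    have hWne : (W : ℝ) ≠ 0 := Nat.cast_ne_zero.2 hWpos.ne'
    have hfne : (n.factorial : ℝ) ≠ 0 := Nat.cast_ne_zero.2 (Nat.factorial_pos n).ne'
    have hsum : (∑ σ : Equiv.Perm (Fin n),
        ∏ j ∈ Finset.Icc 1 n, ((cycleCount σ j).choose (m j) : ℝ))
          = (n.factorial : ℝ) / (W : ℝ) := (eq_div_iff hWne).2 hReal
    have hRHS : ∏ j ∈ Finset.Icc 1 n, ((1 / (j : ℝ)) ^ m j / (m j).factorial)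
        = ((W : ℝ))⁻¹ := by
      rw [hW]
      push_cast
      rw [← Finset.prod_inv_distrib]
      refine Finset.prod_congr rfl fun j hj => ?_
      rw [one_div, inv_pow, div_eq_mul_inv, ← mul_inv]
    rw [permE, hsum, hRHS]
    field_simp
  · -- zero case
    intro hkn
    have hzero : ∀ σ : Equiv.Perm (Fin n),
        ∏ j ∈ Finset.Icc 1 n, ((cycleCount σ j).choose (m j) : ℝ) = 0 := by
      intro σ
      have : ∃ j ∈ Finset.Icc 1 n, cycleCount σ j < m j := by
        by_contra hcon
        push_neg at hcon
        have hle : k ≤ ∑ j ∈ Finset.Icc 1 n, j * cycleCount σ j := by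
          rw [hk]
          exact Finset.sum_le_sum fun j hj => Nat.mul_le_mul_left j (hcon j hj)
        rw [sum_j_cycleCount σ] at hle
        omega
      obtain ⟨j0, hj0, hlt⟩ := this
      refine Finset.prod_eq_zero hj0 ?_
      rw [Nat.choose_eq_zero_of_lt hlt, Nat.cast_zero]
    rw [permE]
    rw [Finset.sum_congr rfl fun σ _ => hzero σ, Finset.sum_const, smul_zero, zero_div]
end

section
/- For any n ≥ 1, any 1 ≤ j ≤ n, and any integer 0 ≤ m ≤ n/j, the probability that a uniformly random σ ∈ S_n has exactly m cycles of length j equals ( (1/j)^m / m! ) · Σ_{h=0}^{⌊n/j⌋ − m} (−1/j)^h / h!. -/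
open Finset

namespace Goncharov
open Equiv Equiv.Perm Function

variable {n j k : ℕ}

def blockCyc (k j : ℕ) : Equiv.Perm (Fin k × Fin j) :=
  Equiv.prodCongr (Equiv.refl (Fin k)) (finRotate j)

lemma finRotate_mk {j i : ℕ} (h : i < j) (h' : i + 1 < j) :
    finRotate j ⟨i, h⟩ = ⟨i + 1, h'⟩ := by
  cases j with
  | zero => omega
  | succ j' =>
    rw [finRotate_succ_apply]
    ext
    simp [Fin.add_def, Fin.val_one']
    omega

lemma finRotate_mk_last {j i : ℕ} (h : i < j) (h' : i + 1 = j) :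
    finRotate j ⟨i, h⟩ = ⟨0, by omega⟩ := by
  cases j with
  | zero => omega
  | succ j' =>
    rw [finRotate_succ_apply]
    ext
    simp only [Fin.add_def, Fin.val_one', Fin.val_mk]
    rcases Nat.eq_zero_or_pos j' with h0 | h0
    · subst h0; omega
    · rw [Nat.mod_eq_of_lt (by omega : 1 < j'+1), h', Nat.mod_self]

def Compat (σ : Equiv.Perm (Fin n)) (f : (Fin k × Fin j) ↪ Fin n) : Prop :=
  ∀ z, σ (f z) = f (blockCyc k j z)

variable {σ : Equiv.Perm (Fin n)} {f : (Fin k × Fin j) ↪ Fin n}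

lemma compat_apply_pow (hσf : Compat σ f) (hj : 0 < j) (b : Fin k) (i : ℕ) (hi : i < j) :
    f (b, ⟨i, hi⟩) = (σ ^ i) (f (b, ⟨0, hj⟩)) := by
  induction i with
  | zero => simp
  | succ i ih =>
    have hi' : i < j := by omega
    have h1 : (⟨i + 1, hi⟩ : Fin j) = finRotate j ⟨i, hi'⟩ := (finRotate_mk hi' hi).symm
    have h2 : (b, finRotate j ⟨i, hi'⟩) = blockCyc k j (b, ⟨i, hi'⟩) := rfl
    rw [h1, h2, ← hσf (b, ⟨i, hi'⟩), ih hi', pow_succ', Equiv.Perm.mul_apply]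

lemma compat_pow_self (hσf : Compat σ f) (hj : 0 < j) (b : Fin k) :
    (σ ^ j) (f (b, ⟨0, hj⟩)) = f (b, ⟨0, hj⟩) := by
  have hj1 : j - 1 < j := by omega
  have h0 : j = (j - 1) + 1 := by omega
  have h1 := compat_apply_pow hσf hj b (j - 1) hj1
  have h2 := hσf (b, ⟨j - 1, hj1⟩)
  have h3 : blockCyc k j (b, ⟨j - 1, hj1⟩) = (b, ⟨0, hj⟩) := by
    have := finRotate_mk_last hj1 (by omega)
    simp only [blockCyc, Equiv.prodCongr_apply, Prod.map, Equiv.refl_apply, this]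
  rw [h3, h1] at h2
  calc (σ ^ j) (f (b, ⟨0, hj⟩)) = σ ((σ ^ (j-1)) (f (b, ⟨0, hj⟩))) := by
        rw [← Equiv.Perm.mul_apply, ← pow_succ', ← h0]
    _ = f (b, ⟨0, hj⟩) := h2

lemma compat_minimalPeriod (hσf : Compat σ f) (hj : 0 < j) (b : Fin k) :
    Function.minimalPeriod ⇑σ (f (b, ⟨0, hj⟩)) = j := by
  set x := f (b, ⟨0, hj⟩) with hx
  have hper : Function.IsPeriodicPt ⇑σ j x := by
    rw [Function.IsPeriodicPt, Function.IsFixedPt, Equiv.Perm.iterate_eq_pow]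
    exact compat_pow_self hσf hj b
  have hd : Function.minimalPeriod ⇑σ x ∣ j := hper.minimalPeriod_dvd
  have hpos : 0 < Function.minimalPeriod ⇑σ x := hper.minimalPeriod_pos hj
  by_contra hne
  have hlt : Function.minimalPeriod ⇑σ x < j :=
    lt_of_le_of_ne (Nat.le_of_dvd hj hd) hne
  have hfix : (σ ^ Function.minimalPeriod ⇑σ x) x = x := by
    rw [← Equiv.Perm.iterate_eq_pow]
    exact Function.iterate_minimalPeriod
  have h4 : f (b, ⟨Function.minimalPeriod ⇑σ x, hlt⟩) = f (b, ⟨0, hj⟩) :=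
    (compat_apply_pow hσf hj b _ hlt).trans hfix
  have h2 := f.injective h4
  have : Function.minimalPeriod ⇑σ x = 0 := by
    have := congrArg (fun z => (Prod.snd z).val) h2
    simpa using this
  omega

end Goncharov

namespace Goncharov
open Equiv Equiv.Perm Function

variable {n j k : ℕ} {σ : Equiv.Perm (Fin n)} {f : (Fin k × Fin j) ↪ Fin n}

lemma sameCycle_of_pow_eq {x y : Fin n} {a b : ℕ} (h : (σ ^ a) x = (σ ^ b) y) :
    σ.SameCycle x y := by
  refine ⟨(a : ℤ) - b, ?_⟩
  have h2 : (σ ^ (a : ℤ)) x = (σ ^ (b : ℤ)) y := by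
    simpa [zpow_natCast] using h
  calc (σ ^ ((a : ℤ) - b)) x = (σ ^ (-(b : ℤ))) ((σ ^ (a : ℤ)) x) := by
        rw [← Equiv.Perm.mul_apply, ← zpow_add, neg_add_eq_sub]
    _ = (σ ^ (-(b : ℤ))) ((σ ^ (b : ℤ)) y) := by rw [h2]
    _ = y := by
        rw [← Equiv.Perm.mul_apply, ← zpow_add, neg_add_cancel, zpow_zero, Equiv.Perm.one_apply]

lemma pow_inj_lt {x : Fin n} (hx : Function.minimalPeriod ⇑σ x = j) {a b : ℕ}
    (ha : a < j) (hb : b < j) (h : (σ ^ a) x = (σ ^ b) x) : a = b := by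
  apply Function.iterate_injOn_Iio_minimalPeriod (f := ⇑σ) (x := x)
  · exact Set.mem_Iio.mpr (by rw [hx]; exact ha)
  · exact Set.mem_Iio.mpr (by rw [hx]; exact hb)
  · simpa [Equiv.Perm.iterate_eq_pow] using h

lemma sameCycle_exists_pow_lt (hj : 0 < j) {x y : Fin n}
    (hx : Function.minimalPeriod ⇑σ x = j) (h : σ.SameCycle x y) :
    ∃ i, ∃ hi : i < j, (σ ^ i) x = y := by
  obtain ⟨i, _, rfl⟩ := h.exists_pow_eq'
  refine ⟨i % j, Nat.mod_lt _ hj, ?_⟩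
  have h2 := Function.iterate_mod_minimalPeriod_eq (f := ⇑σ) (x := x) (n := i)
  rw [hx] at h2
  simpa [Equiv.Perm.iterate_eq_pow] using h2

lemma compat_orbinj (hσf : Compat σ f) (hj : 0 < j) (b b' : Fin k)
    (h : σ.SameCycle (f (b, ⟨0, hj⟩)) (f (b', ⟨0, hj⟩))) : b = b' := by
  obtain ⟨i, hi, hpow⟩ := sameCycle_exists_pow_lt hj (compat_minimalPeriod hσf hj b) h
  have h2 := f.injective ((compat_apply_pow hσf hj b i hi).trans hpow)
  exact congrArg Prod.fst h2

lemma orbinj_exists (hj : 0 < j) (g : Fin k → {x : Fin n // Function.minimalPeriod ⇑σ x = j})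
    (hg : ∀ b b', σ.SameCycle (g b).1 (g b').1 → b = b') :
    ∃ F : {f : (Fin k × Fin j) ↪ Fin n // Compat σ f},
      ∀ b, F.1 (b, ⟨0, hj⟩) = (g b).1 := by
  set F0 : Fin k × Fin j → Fin n := fun z => (σ ^ (z.2 : ℕ)) (g z.1).1 with hF0
  have hinj : Function.Injective F0 := by
    rintro ⟨b, i⟩ ⟨b', i'⟩ h
    simp only [hF0] at h
    have hbb' : b = b' := hg b b' (sameCycle_of_pow_eq h)
    subst hbb'
    have hii' : (i : ℕ) = (i' : ℕ) := pow_inj_lt (g b).2 i.isLt i'.isLt h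
    exact Prod.ext rfl (Fin.ext hii')
  refine ⟨⟨⟨F0, hinj⟩, ?_⟩, fun b => by simp [hF0]⟩
  rintro ⟨b, iv, hiv⟩
  simp only [Function.Embedding.coeFn_mk, hF0, blockCyc, Equiv.prodCongr_apply, Prod.map,
    Equiv.refl_apply]
  rcases Nat.lt_or_ge (iv + 1) j with hlt | hge
  · rw [finRotate_mk hiv hlt, ← Equiv.Perm.mul_apply, ← pow_succ']
  · have hij : iv + 1 = j := by omega
    rw [finRotate_mk_last hiv hij]
    have hper : (σ ^ j) (g b).1 = (g b).1 := by
      have h5 := Function.iterate_minimalPeriod (f := ⇑σ) (x := (g b).1)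
      rw [(g b).2, Equiv.Perm.iterate_eq_pow] at h5
      exact h5
    calc σ ((σ ^ iv) (g b).1) = (σ ^ (iv + 1)) (g b).1 := by
          rw [← Equiv.Perm.mul_apply, ← pow_succ']
      _ = (σ ^ j) (g b).1 := by rw [hij]
      _ = (σ ^ ((⟨0, hj⟩ : Fin j) : ℕ)) (g b).1 := by simpa using hper

open scoped Classical in
lemma card_compat_emb (hj : 0 < j) (σ : Equiv.Perm (Fin n)) :
    Fintype.card {f : (Fin k × Fin j) ↪ Fin n // Compat σ f}
      = Fintype.card {g : Fin k → {x : Fin n // Function.minimalPeriod ⇑σ x = j} //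
          ∀ b b', σ.SameCycle (g b).1 (g b').1 → b = b'} := by
  apply Fintype.card_of_bijective
    (f := fun F : {f : (Fin k × Fin j) ↪ Fin n // Compat σ f} =>
      (⟨fun b => ⟨F.1 (b, ⟨0, hj⟩), compat_minimalPeriod F.2 hj b⟩,
        fun b b' h => compat_orbinj F.2 hj b b' h⟩ :
        {g : Fin k → {x : Fin n // Function.minimalPeriod ⇑σ x = j} //
          ∀ b b', σ.SameCycle (g b).1 (g b').1 → b = b'}))
  constructor
  · rintro ⟨f1, hf1⟩ ⟨f2, hf2⟩ h
    have h0 : ∀ b : Fin k, f1 (b, ⟨0, hj⟩) = f2 (b, ⟨0, hj⟩) := by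
      intro b
      have := congrFun (congrArg Subtype.val h) b
      exact congrArg Subtype.val this
    apply Subtype.ext
    apply DFunLike.ext
    rintro ⟨b, i⟩
    have hi : i = (⟨(i : ℕ), i.isLt⟩ : Fin j) := by ext; rfl
    rw [hi, compat_apply_pow hf1 hj b _ i.isLt, compat_apply_pow hf2 hj b _ i.isLt, h0]
  · rintro ⟨g, hg⟩
    obtain ⟨F, hF⟩ := orbinj_exists hj g hg
    refine ⟨F, ?_⟩
    apply Subtype.ext
    funext b
    exact Subtype.ext (hF b)

end Goncharov

namespace Goncharov
open Equiv Equiv.Perm Function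

variable {n j k : ℕ} {σ : Equiv.Perm (Fin n)}

/-- The setoid on points of minimal period `j` identifying points on the same cycle. -/
def cycSetoid (σ : Equiv.Perm (Fin n)) (j : ℕ) :
    Setoid {x : Fin n // Function.minimalPeriod ⇑σ x = j} where
  r x y := σ.SameCycle x.1 y.1
  iseqv := ⟨fun x => Equiv.Perm.SameCycle.refl σ x.1, Equiv.Perm.SameCycle.symm,
    Equiv.Perm.SameCycle.trans⟩

open scoped Classical in
lemma card_fiber (hj : 0 < j) (q : Quotient (cycSetoid σ j)) :
    Fintype.card {y : {x : Fin n // Function.minimalPeriod ⇑σ x = j} //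
      Quotient.mk (cycSetoid σ j) y = q} = j := by
  induction q using Quotient.inductionOn with
  | h x =>
    have hx : x.1 ∈ Function.periodicPts ⇑σ := by
      rw [← Function.minimalPeriod_pos_iff_mem_periodicPts, x.2]
      exact hj
    have hper : ∀ i : ℕ, Function.minimalPeriod ⇑σ ((σ ^ i) x.1) = j := by
      intro i
      have h1 := Function.minimalPeriod_apply_iterate hx i
      rw [Equiv.Perm.iterate_eq_pow] at h1
      rw [h1, x.2]
    refine (Fintype.card_of_bijective (f := fun i : Fin j =>
      (⟨⟨(σ ^ (i : ℕ)) x.1, hper (i : ℕ)⟩, Quotient.sound (sameCycle_of_pow_eq (a := 0) (b := (i : ℕ)) (by simp))⟩ :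
        {y : {x : Fin n // Function.minimalPeriod ⇑σ x = j} //
          Quotient.mk (cycSetoid σ j) y = Quotient.mk (cycSetoid σ j) x})) ?_).symm.trans
      (by simp)
    constructor
    · intro a b hab
      have h2 : (σ ^ (a : ℕ)) x.1 = (σ ^ (b : ℕ)) x.1 := by
        have := congrArg (fun z => z.1.1) hab
        simpa using this
      exact Fin.ext (pow_inj_lt x.2 a.isLt b.isLt h2)
    · rintro ⟨⟨y, hy⟩, hq⟩
      have hs : σ.SameCycle x.1 y := (Quotient.exact hq).symm
      obtain ⟨i, hi, hpow⟩ := sameCycle_exists_pow_lt hj x.2 hs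
      exact ⟨⟨i, hi⟩, Subtype.ext (Subtype.ext hpow)⟩

open scoped Classical in
lemma card_Q_mul (hj : 0 < j) :
    Fintype.card (Quotient (cycSetoid σ j)) * j
      = Fintype.card {x : Fin n // Function.minimalPeriod ⇑σ x = j} := by
  have h1 := Fintype.card_congr
    (Equiv.sigmaFiberEquiv (fun y : {x : Fin n // Function.minimalPeriod ⇑σ x = j} =>
      Quotient.mk (cycSetoid σ j) y))
  rw [Fintype.card_sigma] at h1
  rw [← h1]
  rw [Finset.sum_congr rfl (fun q _ => card_fiber hj q), Finset.sum_const, smul_eq_mul,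
    Finset.card_univ]

open scoped Classical in
lemma cycleCount_eq_card_Q (hj : 0 < j) :
    cycleCount σ j = Fintype.card (Quotient (cycSetoid σ j)) := by
  have h1 : (Finset.univ.filter fun x : Fin n => Function.minimalPeriod (⇑σ) x = j).card
      = Fintype.card {x : Fin n // Function.minimalPeriod ⇑σ x = j} :=
    (Fintype.card_subtype _).symm
  rw [cycleCount, h1, ← card_Q_mul hj, Nat.mul_div_cancel _ hj]

open scoped Classical in
lemma card_orbinj (hj : 0 < j) :
    Fintype.card {g : Fin k → {x : Fin n // Function.minimalPeriod ⇑σ x = j} //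
        ∀ b b', σ.SameCycle (g b).1 (g b').1 → b = b'}
      = j ^ k * (cycleCount σ j).descFactorial k := by
  classical
  set Fj := {x : Fin n // Function.minimalPeriod ⇑σ x = j}
  set Q := Quotient (cycSetoid σ j)
  set π : Fj → Q := fun y => Quotient.mk (cycSetoid σ j) y with hπ
  set T := {p : (Fin k ↪ Q) × (Fin k → Fj) // ∀ b, π (p.2 b) = p.1 b} with hT
  have hbij : Function.Bijective
      (fun G : {g : Fin k → Fj // ∀ b b', σ.SameCycle (g b).1 (g b').1 → b = b'} =>
        (⟨(⟨fun b => π (G.1 b), fun b b' hq => G.2 b b' (Quotient.exact hq)⟩, G.1),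
          fun _ => rfl⟩ : T)) := by
    constructor
    · rintro ⟨g, hg⟩ ⟨g', hg'⟩ hgg
      apply Subtype.ext
      exact congrArg (fun t : T => t.1.2) hgg
    · rintro ⟨⟨h, g⟩, hp⟩
      have horb : ∀ b b', σ.SameCycle (g b).1 (g b').1 → b = b' := by
        intro b b' hs
        apply h.injective
        rw [← hp b, ← hp b']
        exact Quotient.sound hs
      refine ⟨⟨g, horb⟩, ?_⟩
      apply Subtype.ext
      apply Prod.ext
      · apply DFunLike.ext
        intro b
        exact hp b
      · rfl
  rw [Fintype.card_of_bijective hbij]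
  have h2 : Fintype.card T
      = ∑ h : Fin k ↪ Q, Fintype.card {g : Fin k → Fj // ∀ b, π (g b) = h b} := by
    rw [Fintype.card_congr (Equiv.subtypeProdEquivSigmaSubtype
      (fun (h : Fin k ↪ Q) (g : Fin k → Fj) => ∀ b, π (g b) = h b)), Fintype.card_sigma]
  have h3 : ∀ h : Fin k ↪ Q, Fintype.card {g : Fin k → Fj // ∀ b, π (g b) = h b} = j ^ k := by
    intro h
    rw [Fintype.card_congr (Equiv.subtypePiEquivPi (p := fun b (y : Fj) => π y = h b)),
      Fintype.card_pi]
    rw [Finset.prod_congr rfl (fun b _ => card_fiber hj (h b)), Finset.prod_const,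
      Finset.card_univ, Fintype.card_fin]
  rw [h2, Finset.sum_congr rfl (fun h _ => h3 h), Finset.sum_const, smul_eq_mul,
    Finset.card_univ, Fintype.card_embedding_eq, Fintype.card_fin, mul_comm,
    cycleCount_eq_card_Q hj]
end Goncharov


namespace Goncharov
open Equiv Equiv.Perm Function

variable {n j k : ℕ}

open scoped Classical in
lemma card_compat_perm (f : (Fin k × Fin j) ↪ Fin n) :
    Fintype.card {σ : Equiv.Perm (Fin n) // Compat σ f} = (n - k * j).factorial := by
  set p : Fin n → Prop := fun y => y ∈ Set.range ⇑f with hp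
  set e : (Fin k × Fin j) ≃ Set.range ⇑f := Equiv.ofInjective ⇑f f.injective with he
  set cf : Equiv.Perm {y : Fin n // p y} := e.permCongr (blockCyc k j) with hcf
  have cf_apply : ∀ (z : Fin k × Fin j) (h : p (f z)),
      (cf ⟨f z, h⟩ : Fin n) = f (blockCyc k j z) := by
    intro z h
    have : (⟨f z, h⟩ : {y // p y}) = e z := by
      simp [he, Equiv.ofInjective_apply]
    rw [this]
    simp only [hcf, Equiv.permCongr_apply, Equiv.symm_apply_apply]
    rfl
  set Φ : Equiv.Perm {y : Fin n // ¬ p y} → {σ : Equiv.Perm (Fin n) // Compat σ f} :=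
    fun τ => ⟨Equiv.Perm.subtypeCongr cf τ, by
      intro z
      have h : p (f z) := ⟨z, rfl⟩
      rw [Equiv.Perm.subtypeCongr.left_apply _ _ h, cf_apply]⟩ with hΦ
  have hbij : Function.Bijective Φ := by
    constructor
    · intro τ τ' hττ
      ext y
      have h2 : (Φ τ).1 = (Φ τ').1 := congrArg Subtype.val hττ
      simp only [hΦ] at h2
      have := Equiv.ext_iff.mp h2 (y : Fin n)
      rw [Equiv.Perm.subtypeCongr.right_apply _ _ y.2,
        Equiv.Perm.subtypeCongr.right_apply _ _ y.2] at this
      simp only [Subtype.coe_eta] at this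
      exact congrArg Fin.val this
    · rintro ⟨σ, hσ⟩
      have hmaps : ∀ y : Fin n, p y → p (σ y) := by
        rintro y ⟨z, rfl⟩
        exact ⟨blockCyc k j z, (hσ z).symm⟩
      have hnot : ∀ y : Fin n, ¬ p y → ¬ p (σ y) := by
        rintro y hy ⟨z, hz⟩
        have h2 : σ (f ((blockCyc k j)⁻¹ z)) = σ y := by
          rw [hσ ((blockCyc k j)⁻¹ z), Equiv.Perm.coe_inv, Equiv.apply_symm_apply, hz]
        exact hy ⟨_, σ.injective h2⟩
      have hnot' : ∀ y : Fin n, ¬ p y → ¬ p (σ⁻¹ y) := by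
        intro y hy hcon
        apply hy
        have := hmaps _ hcon
        rwa [Equiv.Perm.coe_inv, Equiv.apply_symm_apply] at this
      refine ⟨⟨fun y => ⟨σ y, hnot y y.2⟩, fun y => ⟨σ⁻¹ y, hnot' y y.2⟩,
        fun y => by simp, fun y => by simp⟩, ?_⟩
      apply Subtype.ext
      ext y
      by_cases hy : p y
      · obtain ⟨z, rfl⟩ := hy
        simp only [hΦ]
        rw [Equiv.Perm.subtypeCongr.left_apply _ _ (show p (f z) from ⟨z, rfl⟩), cf_apply, hσ]
      · simp only [hΦ]
        rw [Equiv.Perm.subtypeCongr.right_apply _ _ hy]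
        rfl
  have h1 : Fintype.card {σ : Equiv.Perm (Fin n) // Compat σ f}
      = (Fintype.card {y : Fin n // ¬ p y}).factorial := by
    rw [← Fintype.card_of_bijective hbij, Fintype.card_perm]
  have hcard : Fintype.card {y : Fin n // p y} = Fintype.card (Fin k × Fin j) :=
    Fintype.card_congr e.symm
  rw [h1, Fintype.card_subtype_compl, hcard, Fintype.card_prod, Fintype.card_fin,
    Fintype.card_fin, Fintype.card_fin]

open scoped Classical in
lemma key_count (hj : 0 < j) (k : ℕ) :
    ∑ σ : Equiv.Perm (Fin n), j ^ k * (cycleCount σ j).descFactorial k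
      = (Fintype.card ((Fin k × Fin j) ↪ Fin n)) * (n - k * j).factorial := by
  have h1 : ∀ σ : Equiv.Perm (Fin n), j ^ k * (cycleCount σ j).descFactorial k
      = Fintype.card {f : (Fin k × Fin j) ↪ Fin n // Compat σ f} := fun σ =>
    ((card_compat_emb hj σ).trans (card_orbinj hj)).symm
  calc ∑ σ : Equiv.Perm (Fin n), j ^ k * (cycleCount σ j).descFactorial k
      = ∑ σ : Equiv.Perm (Fin n), ∑ f : (Fin k × Fin j) ↪ Fin n,
          if Compat σ f then 1 else 0 := by
        refine Finset.sum_congr rfl fun σ _ => ?_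
        rw [h1 σ, Fintype.card_subtype, Finset.card_filter]
    _ = ∑ f : (Fin k × Fin j) ↪ Fin n, ∑ σ : Equiv.Perm (Fin n),
          if Compat σ f then 1 else 0 := Finset.sum_comm
    _ = ∑ _f : (Fin k × Fin j) ↪ Fin n, (n - k * j).factorial := by
        refine Finset.sum_congr rfl fun f _ => ?_
        rw [← Finset.card_filter, ← Fintype.card_subtype, card_compat_perm f]
    _ = (Fintype.card ((Fin k × Fin j) ↪ Fin n)) * (n - k * j).factorial := by
        rw [Finset.sum_const, smul_eq_mul, Finset.card_univ]

lemma key_count' (hj : 0 < j) (k : ℕ) (hkj : k * j ≤ n) :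
    ∑ σ : Equiv.Perm (Fin n), j ^ k * (cycleCount σ j).descFactorial k = n.factorial := by
  rw [key_count hj k]
  rw [Fintype.card_embedding_eq, Fintype.card_prod, Fintype.card_fin, Fintype.card_fin,
    Fintype.card_fin]
  rw [Nat.descFactorial_eq_factorial_mul_choose, mul_comm ((k * j).factorial),
    mul_assoc]
  rw [← mul_assoc]
  exact Nat.choose_mul_factorial_mul_factorial hkj

end Goncharov

namespace Goncharov

lemma choose_mul_choose (c m h : ℕ) :
    c.choose (m + h) * (m + h).choose m = c.choose m * (c - m).choose h := by
  rcases le_or_gt (m + h) c with hle | hlt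
  · rw [Nat.choose_mul (Nat.le_add_right m h), Nat.add_sub_cancel_left]
  · have h1 : c.choose (m + h) = 0 := Nat.choose_eq_zero_of_lt hlt
    rcases le_or_gt m c with h2 | h2
    · have h3 : (c - m).choose h = 0 := Nat.choose_eq_zero_of_lt (by omega)
      rw [h1, h3]
      ring
    · have h3 : c.choose m = 0 := Nat.choose_eq_zero_of_lt h2
      rw [h1, h3]
      ring

lemma descFactorial_add_eq (c m h : ℕ) :
    c.descFactorial (m + h)
      = c.choose m * (c - m).choose h * (m.factorial * h.factorial) := by
  have h1 : (m + h).factorial = (m + h).choose m * m.factorial * h.factorial := by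
    have := Nat.choose_mul_factorial_mul_factorial (Nat.le_add_right m h)
    rw [Nat.add_sub_cancel_left] at this
    exact this.symm
  calc c.descFactorial (m + h) = (m + h).factorial * c.choose (m + h) :=
        Nat.descFactorial_eq_factorial_mul_choose _ _
    _ = (c.choose (m + h) * (m + h).choose m) * (m.factorial * h.factorial) := by
        rw [h1]; ring
    _ = (c.choose m * (c - m).choose h) * (m.factorial * h.factorial) := by
        rw [choose_mul_choose]

lemma alt_sum (K m c : ℕ) (hc : c ≤ K) :
    ∑ h ∈ Finset.range (K - m + 1),
        (-1 : ℝ) ^ h * ((c.descFactorial (m + h) : ℝ) / (m.factorial * h.factorial))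
      = if c = m then 1 else 0 := by
  have hfac : ∀ h : ℕ, ((m.factorial * h.factorial : ℕ) : ℝ) ≠ 0 := by
    intro h
    positivity
  have hterm : ∀ h : ℕ,
      ((c.descFactorial (m + h) : ℝ) / (m.factorial * h.factorial))
        = (c.choose m : ℝ) * ((c - m).choose h : ℝ) := by
    intro h
    rw [descFactorial_add_eq c m h]
    push_cast
    field_simp
  rw [Finset.sum_congr rfl (fun h _ => by rw [hterm h])]
  have hfactor : ∑ h ∈ Finset.range (K - m + 1),
      (-1 : ℝ) ^ h * ((c.choose m : ℝ) * ((c - m).choose h : ℝ))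
      = (c.choose m : ℝ) * ∑ h ∈ Finset.range (K - m + 1),
          (-1 : ℝ) ^ h * ((c - m).choose h : ℝ) := by
    rw [Finset.mul_sum]
    exact Finset.sum_congr rfl fun h _ => by ring
  rw [hfactor]
  rcases lt_or_ge c m with hlt | hge
  · rw [Nat.choose_eq_zero_of_lt hlt]
    simp [Nat.ne_of_lt hlt]
  · set d := c - m with hd
    have hsub : Finset.range (d + 1) ⊆ Finset.range (K - m + 1) :=
      Finset.range_subset_range.mpr (by omega)
    have hvanish : ∀ x ∈ Finset.range (K - m + 1), x ∉ Finset.range (d + 1) →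
        (-1 : ℝ) ^ x * ((d.choose x : ℝ)) = 0 := by
      intro x _ hx
      rw [Finset.mem_range, not_lt] at hx
      rw [Nat.choose_eq_zero_of_lt (by omega)]
      simp
    rw [← Finset.sum_subset hsub hvanish]
    have hint := Int.alternating_sum_range_choose (n := d)
    have hreal : ∑ h ∈ Finset.range (d + 1), (-1 : ℝ) ^ h * ((d.choose h : ℝ))
        = if d = 0 then 1 else 0 := by
      have := congrArg (fun z : ℤ => (z : ℝ)) hint
      push_cast at this
      exact this
    rw [hreal]
    by_cases hcm : c = m
    · rw [if_pos hcm, if_pos (by omega), hcm, Nat.choose_self]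
      norm_num
    · rw [if_neg hcm, if_neg (by omega)]
      norm_num

end Goncharov


namespace Goncharov

variable {n j : ℕ}

lemma cycleCount_le (hj : 0 < j) (σ : Equiv.Perm (Fin n)) : cycleCount σ j ≤ n / j := by
  apply Nat.div_le_div_right
  exact le_trans (Finset.card_filter_le _ _) (by simp)

end Goncharov

/-- **Goncharov's local limit theorem.** For `1 ≤ j ≤ n` and `0 ≤ m ≤ n/j`,
`P(C_j(σ) = m) = ((1/j)^m / m!) Σ_{h=0}^{⌊n/j⌋-m} (-1/j)^h / h!`. -/
theorem goncharov_local (n j m : ℕ) (hn : 1 ≤ n) (hj1 : 1 ≤ j) (hjn : j ≤ n)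
    (hm : m ≤ n / j) :
    permP n (fun σ => cycleCount σ j = m)
      = (1 / (j : ℝ)) ^ m / m.factorial *
          ∑ h ∈ Finset.range (n / j - m + 1), (-1 / (j : ℝ)) ^ h / h.factorial := by
  classical
  have hj : 0 < j := hj1
  set K := n / j with hK
  have hmfac : ((m.factorial : ℝ)) ≠ 0 := by positivity
  have hjne : ((j : ℝ)) ≠ 0 := by positivity
  have hnfac : ((n.factorial : ℝ)) ≠ 0 := by positivity
  have hN : (Nat.card {σ : Equiv.Perm (Fin n) // cycleCount σ j = m} : ℝ)
      = ∑ σ : Equiv.Perm (Fin n), (if cycleCount σ j = m then (1 : ℝ) else 0) := by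
    rw [Nat.card_eq_fintype_card, Fintype.card_subtype, Finset.card_filter, Nat.cast_sum]
    exact Finset.sum_congr rfl fun σ _ => by split <;> simp
  have hbound : ∀ σ : Equiv.Perm (Fin n), cycleCount σ j ≤ K := fun σ =>
    Goncharov.cycleCount_le hj σ
  have hmain : permP n (fun σ => cycleCount σ j = m)
      = (∑ σ : Equiv.Perm (Fin n), ∑ h ∈ Finset.range (K - m + 1),
          (-1 : ℝ) ^ h * (((cycleCount σ j).descFactorial (m + h) : ℝ)
            / (m.factorial * h.factorial))) / n.factorial := by
    rw [permP, hN]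
    congr 1
    exact Finset.sum_congr rfl fun σ _ => (Goncharov.alt_sum K m _ (hbound σ)).symm
  rw [hmain, Finset.sum_comm]
  have hinner : ∀ h ∈ Finset.range (K - m + 1),
      ∑ σ : Equiv.Perm (Fin n), (-1 : ℝ) ^ h * (((cycleCount σ j).descFactorial (m + h) : ℝ)
          / (m.factorial * h.factorial))
        = (-1 : ℝ) ^ h * (n.factorial : ℝ)
            / ((j : ℝ) ^ (m + h) * m.factorial * h.factorial) := by
    intro h hh
    rw [Finset.mem_range] at hh
    have hkj : (m + h) * j ≤ n := by
      have h1 : m + h ≤ n / j := by omega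
      exact (Nat.le_div_iff_mul_le hj).mp h1
    have hkey := Goncharov.key_count' (n := n) hj (m + h) hkj
    have hkeyR : (j : ℝ) ^ (m + h) * (∑ σ : Equiv.Perm (Fin n),
        ((cycleCount σ j).descFactorial (m + h) : ℝ)) = (n.factorial : ℝ) := by
      rw [Finset.mul_sum]
      exact_mod_cast congrArg (Nat.cast : ℕ → ℝ) hkey
    have hjpne : ((j : ℝ)) ^ (m + h) ≠ 0 := pow_ne_zero _ hjne
    have hsum : ∑ σ : Equiv.Perm (Fin n), (((cycleCount σ j).descFactorial (m + h) : ℝ))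
        = (n.factorial : ℝ) / (j : ℝ) ^ (m + h) := by
      rw [eq_div_iff hjpne, mul_comm]
      exact hkeyR
    have hhfac : ((h.factorial : ℝ)) ≠ 0 := by positivity
    calc ∑ σ : Equiv.Perm (Fin n), (-1 : ℝ) ^ h
          * (((cycleCount σ j).descFactorial (m + h) : ℝ) / (m.factorial * h.factorial))
        = (-1 : ℝ) ^ h / (m.factorial * h.factorial)
            * ∑ σ : Equiv.Perm (Fin n), (((cycleCount σ j).descFactorial (m + h) : ℝ)) := by
          rw [Finset.mul_sum]
          exact Finset.sum_congr rfl fun σ _ => by ring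
      _ = (-1 : ℝ) ^ h * (n.factorial : ℝ)
            / ((j : ℝ) ^ (m + h) * m.factorial * h.factorial) := by
          rw [hsum]
          field_simp
  rw [Finset.sum_congr rfl hinner, Finset.sum_div, Finset.mul_sum]
  refine Finset.sum_congr rfl fun h hh => ?_
  have hhfac : ((h.factorial : ℝ)) ≠ 0 := by positivity
  rw [div_pow, one_pow, div_pow, pow_add]
  field_simp
end

section
/- Let I be a nonempty subset of {1,…,n}. For every real λ ≥ 1, P( C_I(σ) ≥ λ·H(I) + 1 ) ≤ 2·e^{1 − Q(λ)·H(I)}, where Q(λ) = λ log λ − λ + 1. -/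
open Finset

open scoped Classical

namespace UTB
variable {n : ℕ}

-- [contents of t1 assumed; will merge later]
variable {n : ℕ}

lemma mem_pp (σ : Equiv.Perm (Fin n)) (x : Fin n) : x ∈ Function.periodicPts ⇑σ :=
  ⟨orderOf σ, orderOf_pos σ, by
    rw [Function.IsPeriodicPt, Equiv.Perm.iterate_eq_pow, pow_orderOf_eq_one]
    exact rfl⟩

lemma mp_pos (σ : Equiv.Perm (Fin n)) (x : Fin n) : 0 < Function.minimalPeriod ⇑σ x :=
  Function.minimalPeriod_pos_of_mem_periodicPts (mem_pp σ x)

/-- The orbit of `x` under `σ` as a finset. -/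
noncomputable def orbF (σ : Equiv.Perm (Fin n)) (x : Fin n) : Finset (Fin n) :=
  univ.filter fun y => σ.SameCycle x y

lemma mem_orbF {σ : Equiv.Perm (Fin n)} {x y : Fin n} :
    y ∈ orbF σ x ↔ σ.SameCycle x y := by simp [orbF]

lemma sameCycle_iff_pow_lt {σ : Equiv.Perm (Fin n)} {x y : Fin n} :
    σ.SameCycle x y ↔ ∃ t < Function.minimalPeriod ⇑σ x, (σ ^ t) x = y := by
  constructor
  · intro h
    obtain ⟨i, _, hi⟩ := h.exists_pow_eq'
    refine ⟨i % Function.minimalPeriod ⇑σ x, Nat.mod_lt _ (mp_pos σ x), ?_⟩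
    rw [← Equiv.Perm.iterate_eq_pow, Function.iterate_mod_minimalPeriod_eq,
      Equiv.Perm.iterate_eq_pow]
    exact hi
  · rintro ⟨t, _, rfl⟩
    exact ⟨t, rfl⟩

lemma orbF_eq_image (σ : Equiv.Perm (Fin n)) (x : Fin n) :
    orbF σ x = (range (Function.minimalPeriod ⇑σ x)).image fun t => (σ ^ t) x := by
  ext y
  simp only [mem_orbF, mem_image, mem_range, sameCycle_iff_pow_lt]

lemma card_orbF (σ : Equiv.Perm (Fin n)) (x : Fin n) :
    (orbF σ x).card = Function.minimalPeriod ⇑σ x := by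
  rw [orbF_eq_image, Finset.card_image_of_injOn, Finset.card_range]
  intro a ha b hb hab
  simp only [Finset.coe_range, Set.mem_Iio] at ha hb
  exact Function.iterate_injOn_Iio_minimalPeriod ha hb
    (by simpa [Equiv.Perm.iterate_eq_pow] using hab)

lemma self_mem_orbF (σ : Equiv.Perm (Fin n)) (x : Fin n) : x ∈ orbF σ x :=
  mem_orbF.2 (Equiv.Perm.SameCycle.refl σ x)

lemma orbF_eq_iff {σ : Equiv.Perm (Fin n)} {x y : Fin n} :
    orbF σ x = orbF σ y ↔ σ.SameCycle x y := by
  constructor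
  · intro h
    have := self_mem_orbF σ y
    rw [← h, mem_orbF] at this
    exact this
  · intro h
    ext z
    simp only [mem_orbF]
    exact ⟨fun hz => (h.symm).trans hz, fun hz => h.trans hz⟩

lemma mem_orbF_iff_orbF_eq {σ : Equiv.Perm (Fin n)} {x y : Fin n} :
    y ∈ orbF σ x ↔ orbF σ y = orbF σ x := by
  rw [mem_orbF, orbF_eq_iff, Equiv.Perm.sameCycle_comm]


noncomputable def orbs (σ : Equiv.Perm (Fin n)) : Finset (Finset (Fin n)) :=
  univ.image (orbF σ)

lemma orbF_mem_orbs (σ : Equiv.Perm (Fin n)) (x : Fin n) : orbF σ x ∈ orbs σ :=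
  mem_image.2 ⟨x, mem_univ x, rfl⟩

lemma fiber_eq (σ : Equiv.Perm (Fin n)) {s : Finset (Fin n)} (hs : s ∈ orbs σ) :
    univ.filter (fun x => orbF σ x = s) = s := by
  obtain ⟨y, -, rfl⟩ := mem_image.mp hs
  ext x
  simp only [mem_filter, mem_univ, true_and]
  rw [← mem_orbF_iff_orbF_eq, mem_orbF]

lemma card_of_mem_orbs {σ : Equiv.Perm (Fin n)} {s : Finset (Fin n)} (hs : s ∈ orbs σ)
    {x : Fin n} (hx : x ∈ s) : Function.minimalPeriod ⇑σ x = s.card := by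
  obtain ⟨y, -, rfl⟩ := mem_image.mp hs
  rw [mem_orbF_iff_orbF_eq] at hx
  rw [← card_orbF, hx]

lemma nonempty_of_mem_orbs {σ : Equiv.Perm (Fin n)} {s : Finset (Fin n)} (hs : s ∈ orbs σ) :
    s.Nonempty := by
  obtain ⟨y, -, rfl⟩ := mem_image.mp hs
  exact ⟨y, self_mem_orbF σ y⟩

lemma eq_of_mem_orbs_of_mem {σ : Equiv.Perm (Fin n)} {s t : Finset (Fin n)}
    (hs : s ∈ orbs σ) (ht : t ∈ orbs σ) {x : Fin n} (hxs : x ∈ s) (hxt : x ∈ t) : s = t := by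
  obtain ⟨y, -, rfl⟩ := mem_image.mp hs
  obtain ⟨z, -, rfl⟩ := mem_image.mp ht
  rw [mem_orbF_iff_orbF_eq] at hxs hxt
  rw [← hxs, ← hxt]

lemma card_orbs_le (σ : Equiv.Perm (Fin n)) : (orbs σ).card ≤ n := by
  calc (orbs σ).card ≤ (univ : Finset (Fin n)).card := Finset.card_image_le
  _ = n := by simp

lemma cycleCount_eq (σ : Equiv.Perm (Fin n)) {j : ℕ} (hj : 0 < j) :
    cycleCount σ j = ((orbs σ).filter fun s => s.card = j).card := by
  have key : (univ.filter fun x => Function.minimalPeriod (⇑σ) x = j).card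
      = j * ((orbs σ).filter fun s => s.card = j).card := by
    rw [Finset.card_eq_sum_card_fiberwise
      (f := orbF σ) (t := (orbs σ).filter fun s => s.card = j) ?mem]
    case mem =>
      intro x hx
      simp only [Finset.mem_coe, mem_filter, mem_univ, true_and] at hx
      exact mem_filter.2 ⟨orbF_mem_orbs σ x, by rw [card_orbF, hx]⟩
    rw [Finset.sum_congr rfl (fun s hs => ?_), Finset.sum_const, smul_eq_mul, mul_comm]
    have hs' := mem_filter.mp hs
    have : (univ.filter fun x => Function.minimalPeriod (⇑σ) x = j).filter
        (fun x => orbF σ x = s) = s := by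
      ext x
      simp only [mem_filter, mem_univ, true_and]
      constructor
      · rintro ⟨-, h2⟩; rw [← h2]; exact self_mem_orbF σ x
      · intro hx
        have hx' : orbF σ x = s := by
          rw [← fiber_eq σ hs'.1] at hx
          simpa using hx
        refine ⟨?_, hx'⟩
        rw [← card_orbF, hx', hs'.2]
    rw [this, hs'.2]
  rw [cycleCount, key, Nat.mul_div_cancel_left _ hj]

noncomputable def orbsI (σ : Equiv.Perm (Fin n)) (I : Finset ℕ) : Finset (Finset (Fin n)) :=
  (orbs σ).filter fun s => s.card ∈ I

lemma cycleCountIn_eq (σ : Equiv.Perm (Fin n)) {I : Finset ℕ} (hI : ∀ j ∈ I, 0 < j) :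
    cycleCountIn σ I = (orbsI σ I).card := by
  unfold cycleCountIn orbsI
  rw [Finset.card_eq_sum_card_fiberwise (f := fun s => s.card) (t := I)
      (s := (orbs σ).filter fun s => s.card ∈ I)
      (fun s hs => (mem_filter.mp hs).2)]
  refine Finset.sum_congr rfl fun j hj => ?_
  rw [cycleCount_eq σ (hI j hj)]
  simp only [Finset.filter_filter]
  exact congrArg Finset.card
    (Finset.filter_congr fun s _ => ⟨fun h => ⟨h ▸ hj, h⟩, And.right⟩)

lemma card_inj_tuples {β : Type*} [DecidableEq β] [Fintype β] (S : Finset β) (k : ℕ) :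
    (univ.filter fun f : Fin k → β => Function.Injective f ∧ ∀ i, f i ∈ S).card
      = S.card.descFactorial k := by
  classical
  have h1 : S.card.descFactorial k = Fintype.card (Fin k ↪ ↥S) := by
    rw [Fintype.card_embedding_eq, Fintype.card_coe, Fintype.card_fin]
  rw [h1, ← Fintype.card_subtype]
  refine Fintype.card_congr ⟨fun f => ⟨fun i => ⟨f.1 i, f.2.2 i⟩,
      fun a b h => f.2.1 (congrArg Subtype.val h)⟩,
    fun e => ⟨fun i => (e i : β), fun a b h => e.injective (Subtype.ext h),
      fun i => (e i).2⟩, fun f => rfl, fun e => ?_⟩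
  ext i
  rfl

variable {k : ℕ}

noncomputable def tupJ (σ : Equiv.Perm (Fin n)) (k : ℕ) (j : Fin k → ℕ) :
    Finset (Fin k → Finset (Fin n)) :=
  univ.filter fun O => Function.Injective O ∧ ∀ i, O i ∈ orbs σ ∧ (O i).card = j i

noncomputable def markx (σ : Equiv.Perm (Fin n)) (k : ℕ) (j : Fin k → ℕ) :
    Finset (Fin k → Fin n) :=
  univ.filter fun x => (∀ i, Function.minimalPeriod ⇑σ (x i) = j i) ∧
    ∀ i i', i ≠ i' → ¬σ.SameCycle (x i) (x i')

lemma descFactorial_eq_sum_tupJ (σ : Equiv.Perm (Fin n)) (k : ℕ) {I : Finset ℕ}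
    (hI : ∀ j ∈ I, 0 < j) :
    (cycleCountIn σ I).descFactorial k
      = ∑ j ∈ Fintype.piFinset (fun _ : Fin k => I), (tupJ σ k j).card := by
  rw [cycleCountIn_eq σ hI, ← card_inj_tuples (orbsI σ I) k]
  rw [Finset.card_eq_sum_card_fiberwise (f := fun O i => (O i).card)
      (t := Fintype.piFinset (fun _ : Fin k => I))
      (fun O hO => by
        simp only [Finset.mem_coe, mem_filter, mem_univ, true_and, orbsI] at hO
        exact Fintype.mem_piFinset.2 fun i => (hO.2 i).2)]
  refine Finset.sum_congr rfl fun j hj => ?_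
  congr 1
  ext O
  simp only [tupJ, mem_filter, mem_univ, true_and, orbsI, funext_iff]
  constructor
  · rintro ⟨⟨hinj, hmem⟩, hcard⟩
    exact ⟨hinj, fun i => ⟨(hmem i).1, hcard i⟩⟩
  · rintro ⟨hinj, h⟩
    exact ⟨⟨hinj, fun i => ⟨(h i).1, (h i).2 ▸ (Fintype.mem_piFinset.1 hj i)⟩⟩,
      fun i => (h i).2⟩

lemma markx_card (σ : Equiv.Perm (Fin n)) (k : ℕ) (j : Fin k → ℕ) :
    (markx σ k j).card = (∏ i, j i) * (tupJ σ k j).card := by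
  rw [Finset.card_eq_sum_card_fiberwise (f := fun x i => orbF σ (x i)) (t := tupJ σ k j)
      (fun x hx => by
        simp only [Finset.mem_coe, markx, mem_filter, mem_univ, true_and] at hx
        obtain ⟨hper, hpw⟩ := hx
        simp only [Finset.mem_coe, tupJ, mem_filter, mem_univ, true_and]
        refine ⟨fun a b hab => ?_, fun i => ⟨orbF_mem_orbs σ (x i), by rw [card_orbF, hper i]⟩⟩
        by_contra hne
        exact hpw a b hne (orbF_eq_iff.1 hab))]
  rw [Finset.sum_congr rfl (fun O hO => ?_), Finset.sum_const, smul_eq_mul, mul_comm]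
  have hO' := mem_filter.mp hO
  simp only [mem_univ, true_and] at hO'
  obtain ⟨hinj, hOi⟩ := hO'
  have hfib : (markx σ k j).filter (fun x => (fun i => orbF σ (x i)) = O)
      = Fintype.piFinset (fun i => O i) := by
    ext x
    simp only [markx, mem_filter, mem_univ, true_and, Fintype.mem_piFinset,
      funext_iff]
    constructor
    · rintro ⟨-, horb⟩ i
      rw [← horb i]
      exact self_mem_orbF σ (x i)
    · intro hx
      have horb : ∀ i, orbF σ (x i) = O i := fun i =>
        eq_of_mem_orbs_of_mem (orbF_mem_orbs σ (x i)) (hOi i).1 (self_mem_orbF σ (x i)) (hx i)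
      refine ⟨⟨fun i => by rw [← card_orbF, horb i, (hOi i).2], fun a b hne hsc => ?_⟩, horb⟩
      exact hne (hinj (by rw [← horb a, ← horb b, orbF_eq_iff]; exact hsc))
  rw [hfib, Fintype.card_piFinset]
  exact Finset.prod_congr rfl fun i _ => (hOi i).2


section inj
variable {k : ℕ} {j : Fin k → ℕ}

/-- pairs (σ, x) where x marks k pairwise-distinct cycles with lengths j i -/
def TT (n k : ℕ) (j : Fin k → ℕ) :=
  {p : Equiv.Perm (Fin n) × (Fin k → Fin n) //
    (∀ i, Function.minimalPeriod ⇑p.1 (p.2 i) = j i) ∧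
      ∀ i i', i ≠ i' → ¬p.1.SameCycle (p.2 i) (p.2 i')}

noncomputable instance : Fintype (TT n k j) := by unfold TT; infer_instance

lemma sameCycle_pow (σ : Equiv.Perm (Fin n)) (x : Fin n) (t : ℕ) :
    σ.SameCycle x ((σ ^ t) x) := ⟨(t : ℤ), by rw [zpow_natCast]⟩

noncomputable def wOf (p : TT n k j) : ((i : Fin k) × Fin (j i)) ↪ Fin n where
  toFun := fun u => (p.1.1 ^ (u.2 : ℕ)) (p.1.2 u.1)
  inj' := by
    rintro ⟨a, s⟩ ⟨b, t⟩ h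
    simp only at h
    have hsc : p.1.1.SameCycle (p.1.2 a) (p.1.2 b) :=
      ((sameCycle_pow p.1.1 (p.1.2 a) s).trans
        (h ▸ (sameCycle_pow p.1.1 (p.1.2 b) t).symm : _))
    have hab : a = b := by
      by_contra hne
      exact p.2.2 a b hne hsc
    subst hab
    have hst : (s : ℕ) = (t : ℕ) := by
      refine Function.iterate_injOn_Iio_minimalPeriod (f := ⇑p.1.1) (x := p.1.2 a) ?_ ?_ ?_
      · rw [p.2.1 a]; exact Set.mem_Iio.2 s.2
      · rw [p.2.1 a]; exact Set.mem_Iio.2 t.2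
      · simpa [Equiv.Perm.iterate_eq_pow] using h
    exact congrArg (fun z => (⟨a, z⟩ : (i : Fin k) × Fin (j i))) (Fin.ext hst)

lemma mem_range_wOf {p : TT n k j} {y : Fin n} :
    y ∈ Set.range ⇑(wOf p) ↔ ∃ i, p.1.1.SameCycle (p.1.2 i) y := by
  constructor
  · rintro ⟨⟨i, t⟩, rfl⟩
    exact ⟨i, sameCycle_pow _ _ _⟩
  · rintro ⟨i, hsc⟩
    rw [sameCycle_iff_pow_lt, p.2.1 i] at hsc
    obtain ⟨t, ht, rfl⟩ := hsc
    exact ⟨⟨i, ⟨t, ht⟩⟩, rfl⟩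

lemma range_invariant (p : TT n k j) (y : Fin n) :
    p.1.1 y ∈ Set.range ⇑(wOf p) ↔ y ∈ Set.range ⇑(wOf p) := by
  rw [mem_range_wOf, mem_range_wOf]
  exact exists_congr fun i => Equiv.Perm.sameCycle_apply_right

noncomputable def cOf (p : TT n k j) : Equiv.Perm {y // y ∉ Set.range ⇑(wOf p)} :=
  p.1.1.subtypePerm fun y => not_congr (range_invariant p y)

lemma card_compl (w : ((i : Fin k) × Fin (j i)) ↪ Fin n) :
    Fintype.card {y : Fin n // y ∉ Set.range ⇑w} = n - ∑ i, j i := by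
  rw [Fintype.card_subtype_compl]
  congr 1
  · simp
  · rw [← Fintype.card_congr (Equiv.ofInjective ⇑w w.injective)]
    simp

noncomputable def eqvOf (w : ((i : Fin k) × Fin (j i)) ↪ Fin n) :
    {y : Fin n // y ∉ Set.range ⇑w} ≃ Fin (n - ∑ i, j i) :=
  Fintype.equivFinOfCardEq (card_compl w)

noncomputable def Phi (p : TT n k j) :
    (((i : Fin k) × Fin (j i)) ↪ Fin n) × Equiv.Perm (Fin (n - ∑ i, j i)) :=
  (wOf p, (eqvOf (wOf p)).permCongr (cOf p))

noncomputable def succJ (hj : ∀ i, 0 < j i) (u : (i : Fin k) × Fin (j i)) :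
    (i : Fin k) × Fin (j i) :=
  if h : (u.2 : ℕ) + 1 < j u.1 then ⟨u.1, ⟨u.2 + 1, h⟩⟩ else ⟨u.1, ⟨0, hj u.1⟩⟩

noncomputable def recon (hj : ∀ i, 0 < j i)
    (q : (((i : Fin k) × Fin (j i)) ↪ Fin n) × Equiv.Perm (Fin (n - ∑ i, j i)))
    (y : Fin n) : Fin n :=
  if h : ∃ u, q.1 u = y then q.1 (succJ hj h.choose)
  else ((eqvOf q.1).symm (q.2 (eqvOf q.1 ⟨y, fun hc => h hc⟩))).val

lemma wOf_succJ (hj : ∀ i, 0 < j i) (p : TT n k j) (u : (i : Fin k) × Fin (j i)) :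
    wOf p (succJ hj u) = p.1.1 (wOf p u) := by
  obtain ⟨i, t⟩ := u
  show wOf p (if _ : _ then _ else _) = _
  by_cases h : (t : ℕ) + 1 < j i
  · rw [dif_pos h]
    show (p.1.1 ^ ((t : ℕ) + 1)) (p.1.2 i) = p.1.1 ((p.1.1 ^ (t : ℕ)) (p.1.2 i))
    rw [pow_succ']
    rfl
  · rw [dif_neg h]
    have ht1 : (t : ℕ) + 1 = j i := by
      have := t.2
      omega
    show (p.1.1 ^ (0 : ℕ)) (p.1.2 i) = p.1.1 ((p.1.1 ^ (t : ℕ)) (p.1.2 i))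
    have hper : (p.1.1 ^ ((t : ℕ) + 1)) (p.1.2 i) = p.1.2 i := by
      have hp := Function.isPeriodicPt_minimalPeriod ⇑p.1.1 (p.1.2 i)
      rw [p.2.1 i] at hp
      rw [ht1, ← Equiv.Perm.iterate_eq_pow]
      exact hp
    rw [pow_succ'] at hper
    rw [pow_zero, ← Equiv.Perm.mul_apply, hper]
    rfl

lemma recon_spec (hj : ∀ i, 0 < j i) (p : TT n k j) (y : Fin n) :
    recon hj (Phi p) y = p.1.1 y := by
  unfold recon Phi
  by_cases h : ∃ u, wOf p u = y
  · rw [dif_pos h]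
    have hc : wOf p h.choose = y := h.choose_spec
    rw [wOf_succJ hj p h.choose, hc]
  · rw [dif_neg h]
    simp only [Equiv.permCongr_apply, Equiv.symm_apply_apply]
    rfl

lemma Phi_injective (hj : ∀ i, 0 < j i) : Function.Injective (Phi (n := n) (k := k) (j := j)) := by
  intro p q hpq
  have hw : wOf p = wOf q := congrArg Prod.fst hpq
  have hx : p.1.2 = q.1.2 := by
    funext i
    have h0 : p.1.2 i = wOf p ⟨i, ⟨0, hj i⟩⟩ := by
      show p.1.2 i = (p.1.1 ^ (0 : ℕ)) (p.1.2 i)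
      rw [pow_zero]
      rfl
    have h0' : q.1.2 i = wOf q ⟨i, ⟨0, hj i⟩⟩ := by
      show q.1.2 i = (q.1.1 ^ (0 : ℕ)) (q.1.2 i)
      rw [pow_zero]
      rfl
    rw [h0, h0', hw]
  have hσ : p.1.1 = q.1.1 := by
    apply Equiv.ext
    intro y
    rw [← recon_spec hj p y, ← recon_spec hj q y, hpq]
  exact Subtype.ext (Prod.ext hσ hx)

lemma descFactorial_mul_factorial_le (m : ℕ) : n.descFactorial m * (n - m).factorial ≤ n.factorial := by
  by_cases h : m ≤ n
  · rw [mul_comm, Nat.factorial_mul_descFactorial h]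
  · rw [Nat.descFactorial_eq_zero_iff_lt.2 (by omega)]
    simp

lemma card_TT_le (hj : ∀ i, 0 < j i) : Fintype.card (TT n k j) ≤ n.factorial := by
  have h := Fintype.card_le_of_injective _ (Phi_injective (n := n) hj)
  refine h.trans ?_
  rw [Fintype.card_prod, Fintype.card_perm, Fintype.card_embedding_eq]
  simp only [Fintype.card_sigma, Fintype.card_fin]
  exact descFactorial_mul_factorial_le _

lemma card_TT_eq (k : ℕ) (j : Fin k → ℕ) :
    Fintype.card (TT n k j) = ∑ σ : Equiv.Perm (Fin n), (markx σ k j).card := by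
  unfold TT
  rw [Fintype.card_congr (Equiv.subtypeProdEquivSigmaSubtype
    (fun (σ : Equiv.Perm (Fin n)) (x : Fin k → Fin n) =>
      (∀ i, Function.minimalPeriod ⇑σ (x i) = j i) ∧
        ∀ i i', i ≠ i' → ¬σ.SameCycle (x i) (x i')))]
  rw [Fintype.card_sigma]
  refine Finset.sum_congr rfl fun σ _ => ?_
  rw [Fintype.card_subtype]
  rfl

lemma sum_markx_le (hj : ∀ i, 0 < j i) :
    ∑ σ : Equiv.Perm (Fin n), (markx σ k j).card ≤ n.factorial := by
  rw [← card_TT_eq]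
  exact card_TT_le hj

end inj

section assemble
variable {k : ℕ}

lemma sum_tupJ_le (k : ℕ) (j : Fin k → ℕ) (hj : ∀ i, 0 < j i) :
    (∑ σ : Equiv.Perm (Fin n), ((tupJ σ k j).card : ℝ))
      ≤ (n.factorial : ℝ) * ∏ i, (1 : ℝ) / j i := by
  have hm := sum_markx_le (n := n) (j := j) hj
  have h2 : (∏ i, j i) * (∑ σ : Equiv.Perm (Fin n), (tupJ σ k j).card) ≤ n.factorial := by
    rw [Finset.mul_sum]
    calc ∑ σ : Equiv.Perm (Fin n), (∏ i, j i) * (tupJ σ k j).card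
        = ∑ σ : Equiv.Perm (Fin n), (markx σ k j).card :=
          Finset.sum_congr rfl fun σ _ => (markx_card σ k j).symm
      _ ≤ n.factorial := hm
  have hPj : (0:ℝ) < ∏ i, ((j i : ℕ) : ℝ) :=
    Finset.prod_pos fun i _ => by exact_mod_cast hj i
  have hprod : (∏ i, (1:ℝ) / (j i : ℕ)) = (∏ i, ((j i : ℕ) : ℝ))⁻¹ := by
    rw [← Finset.prod_inv_distrib]
    exact Finset.prod_congr rfl fun i _ => one_div _
  rw [hprod, ← div_eq_mul_inv, le_div_iff₀ hPj]
  have := (Nat.cast_le (α := ℝ)).2 h2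
  push_cast at this
  linarith [this]

lemma sum_descFactorial_le (I : Finset ℕ) (hI : ∀ j ∈ I, 0 < j) (k : ℕ) :
    ∑ σ : Equiv.Perm (Fin n), ((cycleCountIn σ I).descFactorial k : ℝ)
      ≤ (n.factorial : ℝ) * (∑ j ∈ I, (1:ℝ)/j) ^ k := by
  calc ∑ σ : Equiv.Perm (Fin n), ((cycleCountIn σ I).descFactorial k : ℝ)
      = ∑ σ : Equiv.Perm (Fin n), ∑ j ∈ Fintype.piFinset (fun _ : Fin k => I),
          ((tupJ σ k j).card : ℝ) := by
        refine Finset.sum_congr rfl fun σ _ => ?_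
        rw [descFactorial_eq_sum_tupJ σ k hI]
        push_cast
        rfl
    _ = ∑ j ∈ Fintype.piFinset (fun _ : Fin k => I), ∑ σ : Equiv.Perm (Fin n),
          ((tupJ σ k j).card : ℝ) := Finset.sum_comm
    _ ≤ ∑ j ∈ Fintype.piFinset (fun _ : Fin k => I), (n.factorial : ℝ) * ∏ i, (1:ℝ) / j i := by
        refine Finset.sum_le_sum fun j hj => ?_
        exact sum_tupJ_le k j fun i => hI _ (Fintype.mem_piFinset.1 hj i)
    _ = (n.factorial : ℝ) * (∑ j ∈ I, (1:ℝ)/j) ^ k := by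
        rw [← Finset.mul_sum]
        congr 1
        calc ∑ p ∈ Fintype.piFinset (fun _ : Fin k => I), ∏ i, (1:ℝ)/(p i)
            = ∏ _i : Fin k, ∑ x ∈ I, (1:ℝ)/x := (Finset.prod_univ_sum (fun _ : Fin k => I) (fun _ x => (1:ℝ)/x)).symm
          _ = (∑ x ∈ I, (1:ℝ)/x) ^ k := by
              rw [Finset.prod_const, Finset.card_univ, Fintype.card_fin]

lemma cci_le (σ : Equiv.Perm (Fin n)) {I : Finset ℕ} (hI : ∀ j ∈ I, 0 < j) :
    cycleCountIn σ I ≤ n := by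
  rw [cycleCountIn_eq σ hI]
  exact (Finset.card_filter_le _ _).trans (card_orbs_le σ)

lemma exp_moment (I : Finset ℕ) (hI : ∀ j ∈ I, 0 < j) {lam : ℝ} (h1 : 1 ≤ lam) :
    ∑ σ : Equiv.Perm (Fin n), lam ^ (cycleCountIn σ I)
      ≤ (n.factorial : ℝ) * Real.exp ((lam - 1) * ∑ j ∈ I, (1:ℝ)/j) := by
  have hH0 : (0:ℝ) ≤ ∑ j ∈ I, (1:ℝ)/j := Finset.sum_nonneg fun j _ => by positivity
  have hl1 : (0:ℝ) ≤ lam - 1 := by linarith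
  have key : ∀ σ : Equiv.Perm (Fin n), lam ^ (cycleCountIn σ I)
      = ∑ t ∈ Finset.range (n+1), (lam - 1)^t * ((cycleCountIn σ I).choose t : ℝ) := by
    intro σ
    have hb := add_pow (lam - 1) 1 (cycleCountIn σ I)
    simp only [one_pow, mul_one, sub_add_cancel] at hb
    rw [hb]
    refine Finset.sum_subset (Finset.range_subset_range.2 ?_) ?_
    · have := cci_le σ hI; omega
    · intro t _ ht
      rw [Finset.mem_range, not_lt] at ht
      rw [Nat.choose_eq_zero_of_lt (by omega)]
      simp
  have choose_bound : ∀ t : ℕ, ∑ σ : Equiv.Perm (Fin n), ((cycleCountIn σ I).choose t : ℝ)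
      ≤ (n.factorial : ℝ) * (∑ j ∈ I, (1:ℝ)/j) ^ t / (t.factorial : ℝ) := by
    intro t
    have hA := sum_descFactorial_le (n := n) I hI t
    have ht0 : (0:ℝ) < (t.factorial : ℝ) := by exact_mod_cast t.factorial_pos
    rw [le_div_iff₀ ht0]
    calc (∑ σ : Equiv.Perm (Fin n), ((cycleCountIn σ I).choose t : ℝ)) * t.factorial
        = ∑ σ : Equiv.Perm (Fin n), ((cycleCountIn σ I).descFactorial t : ℝ) := by
          rw [Finset.sum_mul]
          refine Finset.sum_congr rfl fun σ _ => ?_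
          rw [Nat.descFactorial_eq_factorial_mul_choose]
          push_cast
          ring
      _ ≤ (n.factorial : ℝ) * (∑ j ∈ I, (1:ℝ)/j) ^ t := hA
  calc ∑ σ : Equiv.Perm (Fin n), lam ^ (cycleCountIn σ I)
      = ∑ σ : Equiv.Perm (Fin n), ∑ t ∈ Finset.range (n+1),
          (lam - 1)^t * ((cycleCountIn σ I).choose t : ℝ) := Finset.sum_congr rfl fun σ _ => key σ
    _ = ∑ t ∈ Finset.range (n+1), ∑ σ : Equiv.Perm (Fin n),
          (lam - 1)^t * ((cycleCountIn σ I).choose t : ℝ) := Finset.sum_comm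
    _ = ∑ t ∈ Finset.range (n+1), (lam - 1)^t *
          ∑ σ : Equiv.Perm (Fin n), ((cycleCountIn σ I).choose t : ℝ) := by
        exact Finset.sum_congr rfl fun t _ => (Finset.mul_sum _ _ _).symm
    _ ≤ ∑ t ∈ Finset.range (n+1), (lam - 1)^t *
          ((n.factorial : ℝ) * (∑ j ∈ I, (1:ℝ)/j) ^ t / (t.factorial : ℝ)) := by
        refine Finset.sum_le_sum fun t _ => ?_
        exact mul_le_mul_of_nonneg_left (choose_bound t) (pow_nonneg hl1 t)
    _ = (n.factorial : ℝ) * ∑ t ∈ Finset.range (n+1),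
          ((lam - 1) * ∑ j ∈ I, (1:ℝ)/j) ^ t / (t.factorial : ℝ) := by
        rw [Finset.mul_sum]
        refine Finset.sum_congr rfl fun t _ => ?_
        rw [mul_pow]
        ring
    _ ≤ (n.factorial : ℝ) * Real.exp ((lam - 1) * ∑ j ∈ I, (1:ℝ)/j) := by
        refine mul_le_mul_of_nonneg_left ?_ (by positivity)
        exact Real.sum_le_exp_of_nonneg (by positivity) (n+1)

end assemble

end UTB

/-- **Upper tail bound.** For nonempty `I ⊆ [n]` and `λ ≥ 1`,
`P(C_I(σ) ≥ λ H(I) + 1) ≤ 2 e^{1 - Q(λ) H(I)}` where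
`Q(λ) = λ log λ - λ + 1`. -/
theorem upper_tail_bound (n : ℕ) (I : Finset ℕ) (hne : I.Nonempty)
    (hsub : I ⊆ Finset.Icc 1 n) (lam : ℝ) (h1 : 1 ≤ lam) :
    permP n (fun σ => lam * Hset I + 1 ≤ (cycleCountIn σ I : ℝ))
      ≤ 2 * Real.exp (1 - (lam * Real.log lam - lam + 1) * Hset I) := by
  classical
  have hI : ∀ j ∈ I, 0 < j := fun j hj => (Finset.mem_Icc.mp (hsub hj)).1
  have hH0 : (0:ℝ) ≤ Hset I := Finset.sum_nonneg fun j _ => by positivity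
  have hlam0 : (0:ℝ) < lam := lt_of_lt_of_le one_pos h1
  have hL0 : 0 ≤ Real.log lam := Real.log_nonneg h1
  have hfact0 : (0:ℝ) < (n.factorial : ℝ) := by exact_mod_cast n.factorial_pos
  set a : ℝ := lam * Hset I + 1 with ha
  set F : Finset (Equiv.Perm (Fin n)) :=
    univ.filter (fun σ => lam * Hset I + 1 ≤ (cycleCountIn σ I : ℝ)) with hF
  have hpow0 : (0:ℝ) < lam ^ a := Real.rpow_pos_of_pos hlam0 a
  have hcard : (Nat.card {σ : Equiv.Perm (Fin n) //
      lam * Hset I + 1 ≤ (cycleCountIn σ I : ℝ)} : ℝ) = (F.card : ℝ) := by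
    rw [Nat.card_eq_fintype_card, Fintype.card_subtype]
  have main : (F.card : ℝ) * lam ^ a
      ≤ (n.factorial : ℝ) * Real.exp ((lam - 1) * Hset I) := by
    calc (F.card : ℝ) * lam ^ a = ∑ _σ ∈ F, lam ^ a := by
          rw [Finset.sum_const, nsmul_eq_mul]
      _ ≤ ∑ σ ∈ F, lam ^ ((cycleCountIn σ I : ℕ) : ℝ) := by
          refine Finset.sum_le_sum fun σ hσ => ?_
          exact Real.rpow_le_rpow_of_exponent_le h1 (Finset.mem_filter.mp hσ).2
      _ = ∑ σ ∈ F, lam ^ (cycleCountIn σ I) := by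
          refine Finset.sum_congr rfl fun σ _ => ?_
          rw [Real.rpow_natCast]
      _ ≤ ∑ σ : Equiv.Perm (Fin n), lam ^ (cycleCountIn σ I) := by
          refine Finset.sum_le_sum_of_subset_of_nonneg (Finset.filter_subset _ _) ?_
          intro σ _ _
          exact pow_nonneg (le_of_lt hlam0) _
      _ ≤ (n.factorial : ℝ) * Real.exp ((lam - 1) * Hset I) := UTB.exp_moment I hI h1
  rw [permP, hcard, div_le_iff₀ hfact0]
  have h2 : (F.card : ℝ) ≤ (n.factorial : ℝ) * Real.exp ((lam - 1) * Hset I) / lam ^ a := by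
    rw [le_div_iff₀ hpow0]
    exact main
  refine h2.trans ?_
  have hsplit : (n.factorial : ℝ) * Real.exp ((lam - 1) * Hset I) / lam ^ a
      = Real.exp ((lam - 1) * Hset I - a * Real.log lam) * (n.factorial : ℝ) := by
    rw [Real.rpow_def_of_pos hlam0, mul_div_assoc, div_eq_mul_inv, ← Real.exp_neg,
      ← Real.exp_add]
    ring_nf
  rw [hsplit]
  refine mul_le_mul_of_nonneg_right ?_ (le_of_lt hfact0)
  have hexp : (lam - 1) * Hset I - a * Real.log lam
      ≤ 1 - (lam * Real.log lam - lam + 1) * Hset I := by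
    rw [ha]
    nlinarith [hL0, hH0]
  calc Real.exp ((lam - 1) * Hset I - a * Real.log lam)
      ≤ Real.exp (1 - (lam * Real.log lam - lam + 1) * Hset I) := Real.exp_le_exp.2 hexp
    _ ≤ 2 * Real.exp (1 - (lam * Real.log lam - lam + 1) * Hset I) := by
        nlinarith [Real.exp_pos (1 - (lam * Real.log lam - lam + 1) * Hset I)]
end

section
/- Let 2 ≤ ℓ ≤ n. The probability that a uniformly random permutation σ ∈ S_n has at least two cycles of the same length j for some j ≥ ℓ (i.e., C_j(σ) ≥ 2 for some j with ℓ ≤ j ≤ n) is at most 1 / (2(ℓ − 1)). -/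
open Finset Equiv Function


lemma merge_lemma {n j : ℕ} (hj : 2 ≤ j) (σ : Equiv.Perm (Fin n)) (x y : Fin n)
    (hx : Function.minimalPeriod ⇑σ x = j) (hy : Function.minimalPeriod ⇑σ y = j)
    (hxy : ¬ σ.SameCycle x y) :
    Function.minimalPeriod ⇑(σ * Equiv.swap x y) x = 2 * j
      ∧ (⇑(σ * Equiv.swap x y))^[j] x = y := by
  set τ := σ * Equiv.swap x y with hτ
  have hyx : ∀ k : ℕ, (⇑σ)^[k] y ≠ x := by
    intro k h
    exact hxy (Equiv.Perm.SameCycle.symm ⟨(k : ℤ), by simpa [Equiv.Perm.iterate_eq_pow] using h⟩)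
  have hxny : ∀ k : ℕ, (⇑σ)^[k] x ≠ y := by
    intro k h
    exact hxy ⟨(k : ℤ), by simpa [Equiv.Perm.iterate_eq_pow] using h⟩
  have hxk : ∀ k, 0 < k → k < j → (⇑σ)^[k] x ≠ x := by
    intro k hk0 hkj h
    have : Function.minimalPeriod ⇑σ x ≤ k := Function.IsPeriodicPt.minimalPeriod_le hk0 h
    omega
  have hyk : ∀ k, 0 < k → k < j → (⇑σ)^[k] y ≠ y := by
    intro k hk0 hkj h
    have : Function.minimalPeriod ⇑σ y ≤ k := Function.IsPeriodicPt.minimalPeriod_le hk0 h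
    omega
  have hpx : (⇑σ)^[j] x = x := by rw [← hx]; exact Function.iterate_minimalPeriod
  have hpy : (⇑σ)^[j] y = y := by rw [← hy]; exact Function.iterate_minimalPeriod
  have hτapp : ∀ z, τ z = σ (Equiv.swap x y z) := fun z => rfl
  have h1 : ∀ k, k + 1 ≤ j → (⇑τ)^[k+1] x = (⇑σ)^[k+1] y := by
    intro k
    induction k with
    | zero => intro _; simp [hτapp, Equiv.swap_apply_left]
    | succ k ih =>
      intro hk
      rw [Function.iterate_succ_apply', ih (by omega), hτapp,
        Equiv.swap_apply_of_ne_of_ne (hyx (k+1)) (hyk (k+1) (by omega) (by omega))]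
      exact (Function.iterate_succ_apply' _ _ _).symm
  have hjx : (⇑τ)^[j] x = y := by
    obtain ⟨j', rfl⟩ : ∃ j', j = j' + 1 := ⟨j - 1, by omega⟩
    rw [h1 j' le_rfl, hpy]
  have h2 : ∀ k, k + 1 ≤ j → (⇑τ)^[j + (k+1)] x = (⇑σ)^[k+1] x := by
    intro k
    induction k with
    | zero =>
      intro _
      rw [show j + 1 = j + 1 from rfl, Function.iterate_succ_apply', hjx]
      simp [hτapp, Equiv.swap_apply_right]
    | succ k ih =>
      intro hk
      rw [show j + (k + 2) = (j + (k+1)) + 1 by omega, Function.iterate_succ_apply',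
        ih (by omega), hτapp,
        Equiv.swap_apply_of_ne_of_ne (hxk (k+1) (by omega) (by omega)) (hxny (k+1))]
      exact (Function.iterate_succ_apply' _ _ _).symm
  have h2j : (⇑τ)^[2*j] x = x := by
    obtain ⟨j', rfl⟩ : ∃ j', j = j' + 1 := ⟨j - 1, by omega⟩
    rw [show 2 * (j' + 1) = (j' + 1) + (j' + 1) by ring, h2 j' le_rfl, hpx]
  have hper : Function.IsPeriodicPt ⇑τ (2*j) x := h2j
  have hdvd : Function.minimalPeriod ⇑τ x ∣ 2 * j := hper.minimalPeriod_dvd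
  have hdpos : 0 < Function.minimalPeriod ⇑τ x := hper.minimalPeriod_pos (by omega)
  set d := Function.minimalPeriod ⇑τ x with hd
  have hdper : (⇑τ)^[d] x = x := Function.iterate_minimalPeriod
  have hdj : ¬ d ≤ j := by
    intro hle
    obtain ⟨d', hd'⟩ : ∃ d', d = d' + 1 := ⟨d - 1, by omega⟩
    rw [hd', h1 d' (by omega)] at hdper
    exact hyx (d'+1) hdper
  have : d = 2 * j := by
    obtain ⟨c, hc⟩ := hdvd
    rcases c with _ | _ | c
    · omega
    · omega
    · exfalso
      have h2d : d * (c + 2) ≥ 2 * d := by nlinarith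
      rw [← hc] at h2d
      omega
  exact ⟨this, hjx⟩


set_option maxHeartbeats 1600000 in

lemma period_filter_card_le (n m : ℕ) (x : Fin n) (hm : 2 ≤ m) :
    (Finset.univ.filter fun τ : Equiv.Perm (Fin n) =>
        Function.minimalPeriod (⇑τ) x = m).card ≤ (n-1).factorial := by
  classical
  set key : Equiv.Perm (Fin n) → (Fin (m-1) → Fin n) :=
    fun τ i => (⇑τ)^[(i:ℕ)+1] x with hkey
  set T : Finset (Fin (m-1) → Fin n) :=
    Finset.univ.filter (fun t => Function.Injective t ∧ ∀ i, t i ≠ x) with hT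
  set P : Finset (Equiv.Perm (Fin n)) :=
    Finset.univ.filter (fun τ : Equiv.Perm (Fin n) =>
      Function.minimalPeriod (⇑τ) x = m) with hP
  have hmap : ∀ τ ∈ P, key τ ∈ T := by
    intro τ hτ
    rw [hP, Finset.mem_filter] at hτ
    have hmin := hτ.2
    rw [hT, Finset.mem_filter]
    refine ⟨Finset.mem_univ _, ?_, ?_⟩
    · intro i i' h
      have h1 : ((i:ℕ)+1) = ((i':ℕ)+1) := by
        refine Function.iterate_injOn_Iio_minimalPeriod (f := ⇑τ) (x := x) ?_ ?_ h
        · simp only [Set.mem_Iio, hmin]; omega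
        · simp only [Set.mem_Iio, hmin]; omega
      exact Fin.ext (by omega)
    · intro i h
      have h1 : ((i:ℕ)+1) = 0 := by
        refine Function.iterate_injOn_Iio_minimalPeriod (f := ⇑τ) (x := x) ?_ ?_ ?_
        · simp only [Set.mem_Iio, hmin]; omega
        · simp only [Set.mem_Iio, hmin]; omega
        · simpa [hkey] using h
      omega
  have hfib := Finset.card_eq_sum_card_fiberwise hmap
  rw [hfib]
  -- bound each fiber
  have hfibbound : ∀ t ∈ T, (P.filter fun τ => key τ = t).card ≤ (n - m).factorial := by
    intro t hT'
    rw [hT, Finset.mem_filter] at hT'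
    obtain ⟨-, htinj, htne⟩ := hT'
    set s : Finset (Fin n) := insert x (Finset.univ.image t) with hs
    -- membership characterization for τ in the fiber
    have hmem : ∀ τ, τ ∈ P.filter (fun τ => key τ = t) →
        ∀ z, z ∈ s ↔ ∃ k, k < m ∧ (⇑τ)^[k] x = z := by
      intro τ hτ z
      rw [Finset.mem_filter, hP, Finset.mem_filter] at hτ
      obtain ⟨⟨-, hmin⟩, hkeyt⟩ := hτ
      constructor
      · intro hz
        rw [hs, Finset.mem_insert] at hz
        rcases hz with rfl | hz
        · exact ⟨0, by omega, rfl⟩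
        · rw [Finset.mem_image] at hz
          obtain ⟨i, -, rfl⟩ := hz
          exact ⟨(i:ℕ)+1, by omega, congrFun hkeyt i⟩
      · rintro ⟨k, hk, rfl⟩
        rcases Nat.eq_zero_or_pos k with rfl | hk0
        · exact Finset.mem_insert_self _ _
        · rw [hs, Finset.mem_insert]
          right
          rw [Finset.mem_image]
          refine ⟨⟨k-1, by omega⟩, Finset.mem_univ _, ?_⟩
          have e := congrFun hkeyt ⟨k-1, by omega⟩
          simp only [hkey] at e
          rw [show k - 1 + 1 = k by omega] at e
          exact e.symm
    have hinv : ∀ τ, τ ∈ P.filter (fun τ => key τ = t) →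
        ∀ z, z ∉ s ↔ τ z ∉ s := by
      intro τ hτ z
      have hmem' := hmem τ hτ
      have hmin : Function.minimalPeriod (⇑τ) x = m := by
        rw [Finset.mem_filter, hP, Finset.mem_filter] at hτ
        exact hτ.1.2
      have hmx : (⇑τ)^[m] x = x := by rw [← hmin]; exact Function.iterate_minimalPeriod
      apply not_congr
      constructor
      · intro hz
        rw [hmem'] at hz ⊢
        obtain ⟨k, hk, rfl⟩ := hz
        by_cases hk1 : k + 1 < m
        · exact ⟨k+1, hk1, Function.iterate_succ_apply' _ _ _⟩
        · refine ⟨0, by omega, ?_⟩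
          have e := (Function.iterate_succ_apply' (⇑τ) k x).symm
          rw [e]
          simp only [Nat.succ_eq_add_one]
          rw [show k + 1 = m by omega, hmx]
          rfl
      · intro hz
        rw [hmem'] at hz ⊢
        obtain ⟨k, hk, hkz⟩ := hz
        rcases Nat.eq_zero_or_pos k with rfl | hk0
        · refine ⟨m-1, by omega, ?_⟩
          apply τ.injective
          have e := (Function.iterate_succ_apply' (⇑τ) (m-1) x).symm
          rw [e]
          simp only [Nat.succ_eq_add_one]
          rw [show m - 1 + 1 = m by omega, hmx]
          simpa using hkz
        · refine ⟨k-1, by omega, ?_⟩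
          apply τ.injective
          have e := (Function.iterate_succ_apply' (⇑τ) (k-1) x).symm
          rw [e]
          simp only [Nat.succ_eq_add_one]
          rw [show k - 1 + 1 = k by omega]
          exact hkz
    -- inject into permutations of the complement of s
    have hcard : (P.filter fun τ => key τ = t).card
        ≤ Fintype.card (Equiv.Perm {z : Fin n // z ∉ s}) := by
      rw [← Fintype.card_coe (P.filter fun τ => key τ = t)]
      apply Fintype.card_le_of_injective
        (fun (τp : {τ : Equiv.Perm (Fin n) // τ ∈ P.filter fun τ => key τ = t}) =>
          if h : ∀ z, z ∉ s ↔ (τp : Equiv.Perm (Fin n)) z ∉ s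
          then Equiv.Perm.subtypePerm (τp : Equiv.Perm (Fin n)) (fun z => (h z).symm) else 1)
      intro τp₁ τp₂ heq
      simp only [dif_pos (hinv _ τp₁.2), dif_pos (hinv _ τp₂.2)] at heq
      have happly : ∀ z (hz : z ∉ s), (τp₁ : Equiv.Perm (Fin n)) z
          = (τp₂ : Equiv.Perm (Fin n)) z := by
        intro z hz
        have := congrFun (congrArg (fun (e : Equiv.Perm {z : Fin n // z ∉ s}) => ⇑e) heq) ⟨z, hz⟩
        simpa [Equiv.Perm.subtypePerm_apply, Subtype.ext_iff] using this
      have hiter : ∀ (τ : Equiv.Perm (Fin n)), τ ∈ P.filter (fun τ => key τ = t) →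
          ∀ z ∈ s, ∃ k, k < m ∧ z = (⇑τ)^[k] x := by
        intro τ hτ z hz
        obtain ⟨k, hk, hkz⟩ := (hmem τ hτ z).1 hz
        exact ⟨k, hk, hkz.symm⟩
      -- on s the values are determined by t
      have hdet : ∀ (τ : Equiv.Perm (Fin n)), τ ∈ P.filter (fun τ => key τ = t) →
          ∀ k, k < m → τ ((⇑τ)^[k] x) = (if h : k + 1 < m then t ⟨k, by omega⟩ else x) := by
        intro τ hτ k hk
        rw [Finset.mem_filter, hP, Finset.mem_filter] at hτ
        obtain ⟨⟨-, hmin⟩, hkeyt⟩ := hτ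
        have e := (Function.iterate_succ_apply' (⇑τ) k x).symm
        rw [e]
        simp only [Nat.succ_eq_add_one]
        by_cases h : k + 1 < m
        · rw [dif_pos h]
          exact congrFun hkeyt ⟨k, by omega⟩
        · rw [dif_neg h]
          rw [show k + 1 = m by omega, ← hmin]
          exact Function.iterate_minimalPeriod
      apply Subtype.ext
      apply Equiv.ext
      intro z
      by_cases hz : z ∈ s
      · obtain ⟨k, hk, rfl⟩ := hiter _ τp₁.2 z hz
        have hsame : ∀ k, k < m → (⇑(τp₁ : Equiv.Perm (Fin n)))^[k] x
            = (⇑(τp₂ : Equiv.Perm (Fin n)))^[k] x := by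
          intro k
          induction k with
          | zero => intro _; rfl
          | succ k ih =>
            intro hk
            have e1 := hdet _ τp₁.2 k (by omega)
            have e2 := hdet _ τp₂.2 k (by omega)
            rw [Function.iterate_succ_apply', Function.iterate_succ_apply', e1]
            exact e2.symm
        have e1 := hdet _ τp₁.2 k hk
        have e2 := hdet _ τp₂.2 k hk
        rw [e1, hsame k hk]
        exact e2.symm
      · exact happly z hz
    refine hcard.trans ?_
    rw [Fintype.card_perm]
    apply Nat.factorial_le
    have : Fintype.card {z : Fin n // z ∉ s} = n - s.card := by
      rw [Fintype.card_subtype_compl, Fintype.card_coe, Fintype.card_fin]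
    rw [this]
    have hscard : s.card = m := by
      rw [hs, Finset.card_insert_of_notMem, Finset.card_image_of_injective _ htinj]
      · simp only [Finset.card_univ, Fintype.card_fin]; omega
      · rw [Finset.mem_image]
        rintro ⟨i, -, hi⟩
        exact htne i hi
    omega
  calc ∑ t ∈ T, (P.filter fun τ => key τ = t).card
      ≤ ∑ _t ∈ T, (n - m).factorial := Finset.sum_le_sum hfibbound
    _ = T.card * (n - m).factorial := by rw [Finset.sum_const, smul_eq_mul]
    _ ≤ (n-1).descFactorial (m-1) * (n - m).factorial := by
        apply Nat.mul_le_mul_right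
        -- count T
        have : T.card = Fintype.card
            {t : Fin (m-1) → Fin n // Function.Injective t ∧ ∀ i, t i ≠ x} := by
          rw [Fintype.card_subtype, hT]
        rw [this]
        have hinj : Fintype.card
            {t : Fin (m-1) → Fin n // Function.Injective t ∧ ∀ i, t i ≠ x}
            ≤ Fintype.card (Fin (m-1) ↪ {y : Fin n // y ≠ x}) := by
          apply Fintype.card_le_of_injective
            (fun tp => ⟨fun i => ⟨tp.1 i, tp.2.2 i⟩,
              fun i i' h => tp.2.1 (by simpa [Subtype.ext_iff] using h)⟩)
          intro t₁ t₂ h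
          apply Subtype.ext
          funext i
          have := congrFun (congrArg (fun (e : Fin (m-1) ↪ {y : Fin n // y ≠ x}) =>
            (⇑e : Fin (m-1) → {y : Fin n // y ≠ x})) h) i
          exact congrArg Subtype.val this
        refine hinj.trans ?_
        rw [Fintype.card_embedding_eq]
        have h1 : Fintype.card {y : Fin n // y ≠ x} = n - 1 := by
          rw [Fintype.card_subtype_compl, Fintype.card_fin, Fintype.card_subtype_eq]
        rw [h1, Fintype.card_fin]
    _ ≤ (n-1).factorial := by
        by_cases hmn : m ≤ n
        · have h1 : m - 1 ≤ n - 1 := by omega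
          have := Nat.factorial_mul_descFactorial h1
          have h2 : (n-1) - (m-1) = n - m := by omega
          rw [h2] at this
          exact le_of_eq (by rw [Nat.mul_comm]; exact this)
        · have : (n-1).descFactorial (m-1) = 0 :=
            Nat.descFactorial_of_lt (by omega)
          rw [this, Nat.zero_mul]
          exact Nat.zero_le _


lemma two_cycle_bound (n j : ℕ) (hj : 2 ≤ j) (hn : 0 < n) :
    2 * j^2 * (Finset.univ.filter fun σ : Equiv.Perm (Fin n) =>
        2 ≤ cycleCount σ j).card ≤ n.factorial := by
  classical
  set Bj := Finset.univ.filter (fun σ : Equiv.Perm (Fin n) => 2 ≤ cycleCount σ j) with hBj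
  set pairs : Equiv.Perm (Fin n) → Finset (Fin n × Fin n) := fun σ =>
    Finset.univ.filter (fun p : Fin n × Fin n => Function.minimalPeriod ⇑σ p.1 = j
      ∧ Function.minimalPeriod ⇑σ p.2 = j ∧ ¬ σ.SameCycle p.1 p.2) with hpairsdef
  have hpair_lb : ∀ σ ∈ Bj, 2*j^2 ≤ (pairs σ).card := by
    intro σ hσ
    rw [hBj, Finset.mem_filter] at hσ
    have hcc := hσ.2
    have hPcard : 2*j ≤ (Finset.univ.filter
        fun z : Fin n => Function.minimalPeriod (⇑σ) z = j).card := by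
      have := (Nat.le_div_iff_mul_le (by omega : 0 < j)).1 hcc
      simpa [cycleCount] using this
    set P := Finset.univ.filter (fun z : Fin n => Function.minimalPeriod (⇑σ) z = j) with hPdef
    have hps : (pairs σ).card = ∑ a : Fin n, (Finset.univ.filter fun b : Fin n =>
        Function.minimalPeriod ⇑σ a = j ∧ Function.minimalPeriod ⇑σ b = j
          ∧ ¬ σ.SameCycle a b).card := by
      rw [hpairsdef]
      simp only [Finset.card_filter]
      rw [Fintype.sum_prod_type]
    rw [hps]
    have hterm : ∀ a ∈ P, P.card - j ≤ (Finset.univ.filter fun b : Fin n =>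
        Function.minimalPeriod ⇑σ a = j ∧ Function.minimalPeriod ⇑σ b = j
          ∧ ¬ σ.SameCycle a b).card := by
      intro a ha
      have haj : Function.minimalPeriod ⇑σ a = j := by
        rw [hPdef, Finset.mem_filter] at ha; exact ha.2
      have hcongr : (Finset.univ.filter fun b : Fin n =>
          Function.minimalPeriod ⇑σ a = j ∧ Function.minimalPeriod ⇑σ b = j
            ∧ ¬ σ.SameCycle a b) = P.filter (fun b => ¬ σ.SameCycle a b) := by
        rw [hPdef, Finset.filter_filter]
        apply Finset.filter_congr
        intro b _
        simp [haj]
      rw [hcongr, Finset.filter_not, Finset.card_sdiff_of_subset (Finset.filter_subset _ _)]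
      have hsc : (P.filter (σ.SameCycle a)).card ≤ j := by
        have hsub : (P.filter (σ.SameCycle a))
            ⊆ (Finset.range j).image (fun k => (⇑σ)^[k] a) := by
          intro b hb
          rw [Finset.mem_filter] at hb
          obtain ⟨i, hi, hib⟩ := Equiv.Perm.SameCycle.exists_pow_eq' hb.2
          rw [Finset.mem_image]
          refine ⟨i % j, Finset.mem_range.2 (Nat.mod_lt _ (by omega)), ?_⟩
          have he : (⇑σ)^[i % j] a = (⇑σ)^[i] a := by
            conv_lhs => rw [← haj]
            exact Function.iterate_mod_minimalPeriod_eq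
          rw [he]
          simpa [Equiv.Perm.iterate_eq_pow] using hib
        exact (Finset.card_le_card hsub).trans
          ((Finset.card_image_le).trans (by simp))
      omega
    calc 2*j^2 = (2*j) * j := by ring
      _ ≤ P.card * (P.card - j) := Nat.mul_le_mul hPcard (by omega)
      _ = ∑ _a ∈ P, (P.card - j) := by rw [Finset.sum_const, smul_eq_mul]
      _ ≤ ∑ a ∈ P, (Finset.univ.filter fun b : Fin n =>
            Function.minimalPeriod ⇑σ a = j ∧ Function.minimalPeriod ⇑σ b = j
              ∧ ¬ σ.SameCycle a b).card := Finset.sum_le_sum hterm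
      _ ≤ ∑ a : Fin n, (Finset.univ.filter fun b : Fin n =>
            Function.minimalPeriod ⇑σ a = j ∧ Function.minimalPeriod ⇑σ b = j
              ∧ ¬ σ.SameCycle a b).card :=
          Finset.sum_le_sum_of_subset (Finset.subset_univ P)
  have hsum1 : 2*j^2 * Bj.card ≤ ∑ σ : Equiv.Perm (Fin n), (pairs σ).card := by
    calc 2*j^2 * Bj.card = ∑ _σ ∈ Bj, 2*j^2 := by
          rw [Finset.sum_const, smul_eq_mul, Nat.mul_comm]
      _ ≤ ∑ σ ∈ Bj, (pairs σ).card := Finset.sum_le_sum hpair_lb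
      _ ≤ ∑ σ : Equiv.Perm (Fin n), (pairs σ).card :=
          Finset.sum_le_sum_of_subset (Finset.subset_univ _)
  set T := Finset.univ.filter (fun q : Equiv.Perm (Fin n) × (Fin n × Fin n) =>
      Function.minimalPeriod ⇑q.1 q.2.1 = j ∧ Function.minimalPeriod ⇑q.1 q.2.2 = j
        ∧ ¬ q.1.SameCycle q.2.1 q.2.2) with hTdef
  have hsum2 : ∑ σ : Equiv.Perm (Fin n), (pairs σ).card = T.card := by
    rw [hTdef, hpairsdef]
    simp only [Finset.card_filter]
    rw [Fintype.sum_prod_type]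
  set U := Finset.univ.filter (fun r : Fin n × Equiv.Perm (Fin n) =>
      Function.minimalPeriod ⇑r.2 r.1 = 2*j) with hUdef
  have hTU : T.card ≤ U.card := by
    apply Finset.card_le_card_of_injOn
      (fun q : Equiv.Perm (Fin n) × (Fin n × Fin n) =>
        (q.2.1, q.1 * Equiv.swap q.2.1 q.2.2))
    · intro q hq
      simp only [Finset.mem_coe, hTdef, Finset.mem_filter] at hq
      obtain ⟨-, h1, h2, h3⟩ := hq
      simp only [Finset.mem_coe, hUdef, Finset.mem_filter]
      exact ⟨Finset.mem_univ _, (merge_lemma hj q.1 q.2.1 q.2.2 h1 h2 h3).1⟩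
    · intro q hq q' hq' heq
      simp only [Finset.mem_coe, hTdef, Finset.mem_filter] at hq hq'
      obtain ⟨-, h1, h2, h3⟩ := hq
      obtain ⟨-, h1', h2', h3'⟩ := hq'
      have heq' : (q.2.1, q.1 * Equiv.swap q.2.1 q.2.2)
          = (q'.2.1, q'.1 * Equiv.swap q'.2.1 q'.2.2) := heq
      obtain ⟨hx, hτ⟩ := Prod.mk.inj heq'
      have hy1 := (merge_lemma hj q.1 q.2.1 q.2.2 h1 h2 h3).2
      have hy2 := (merge_lemma hj q'.1 q'.2.1 q'.2.2 h1' h2' h3').2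
      have hy : q.2.2 = q'.2.2 := by
        rw [← hy1, ← hy2, hτ, hx]
      rw [hx, hy] at hτ
      have hσ : q.1 = q'.1 := mul_right_cancel hτ
      exact Prod.ext hσ (Prod.ext hx hy)
  have hUcard : U.card ≤ n.factorial := by
    have hU2 : U.card = ∑ x : Fin n, (Finset.univ.filter
        fun τ : Equiv.Perm (Fin n) => Function.minimalPeriod (⇑τ) x = 2*j).card := by
      rw [hUdef]
      simp only [Finset.card_filter]
      rw [Fintype.sum_prod_type]
    rw [hU2]
    calc ∑ _x : Fin n, (Finset.univ.filter
          fun τ : Equiv.Perm (Fin n) => Function.minimalPeriod (⇑τ) _x = 2*j).card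
        ≤ ∑ _x : Fin n, (n-1).factorial :=
          Finset.sum_le_sum (fun x _ => period_filter_card_le n (2*j) x (by omega))
      _ = n * (n-1).factorial := by
          rw [Finset.sum_const, smul_eq_mul, Finset.card_univ, Fintype.card_fin]
      _ = n.factorial := Nat.mul_factorial_pred hn.ne'
  omega

lemma sum_inv_sq_le (l : ℕ) (hl : 2 ≤ l) (N : ℕ) :
    ∑ j ∈ Finset.Icc l N, (1:ℝ)/(j:ℝ)^2 ≤ 1/((l:ℝ)-1) := by
  have hl1 : (1:ℝ) < (l:ℝ) := by exact_mod_cast hl.trans_lt' (by omega)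
  have key : ∀ M : ℕ, l ≤ M → ∑ j ∈ Finset.Icc l M, (1:ℝ)/(j:ℝ)^2
      ≤ 1/((l:ℝ)-1) - 1/(M:ℝ) := by
    intro M
    induction M with
    | zero => intro h; omega
    | succ M ih =>
      intro h
      rcases Nat.lt_or_ge M l with hMl | hMl
      · have hlM : l = M + 1 := by omega
        subst hlM
        rw [Finset.Icc_self, Finset.sum_singleton]
        have hpos : (0:ℝ) < (M:ℝ)+1 := by positivity
        push_cast at hl1
        have hpos1 : (0:ℝ) < ((M:ℝ)+1)-1 := by linarith [hl1]
        push_cast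
        rw [div_sub_div _ _ (ne_of_gt hpos1) (ne_of_gt hpos), div_le_div_iff₀ (by positivity)
          (by positivity)]
        nlinarith
      · have hstep := Finset.sum_Icc_succ_top (by omega : l ≤ M + 1)
          (fun j : ℕ => (1:ℝ)/(j:ℝ)^2)
        rw [hstep]
        have h2 := ih hMl
        have hM0 : (0:ℝ) < (M:ℝ) := by
          have : 0 < M := by omega
          exact_mod_cast this
        have h3 : (1:ℝ)/((M:ℝ)+1)^2 ≤ 1/(M:ℝ) - 1/((M:ℝ)+1) := by
          rw [div_sub_div _ _ (ne_of_gt hM0) (by positivity),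
            div_le_div_iff₀ (by positivity) (by positivity)]
          nlinarith
        push_cast
        push_cast at h2
        linarith
  rcases Nat.lt_or_ge N l with hNl | hNl
  · have : Finset.Icc l N = ∅ := by
      rw [Finset.Icc_eq_empty_iff]; omega
    rw [this, Finset.sum_empty]
    have h0 : (0:ℝ) < (l:ℝ) - 1 := by linarith
    exact le_of_lt (div_pos one_pos h0)
  · have := key N hNl
    have hN0 : (0:ℝ) < (N:ℝ) := by
      have : 0 < N := by omega
      exact_mod_cast this
    have : (0:ℝ) ≤ 1/(N:ℝ) := by positivity
    linarith [key N hNl]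


/-- The probability that a random `σ ∈ Sₙ` has two cycles of the same length `j`
for some `j ≥ ℓ` is at most `1/(2(ℓ-1))`, for `2 ≤ ℓ ≤ n`. -/
theorem two_equal_large_cycles (n ℓ : ℕ) (h2 : 2 ≤ ℓ) (hn : ℓ ≤ n) :
    permP n (fun σ => ∃ j ∈ Finset.Icc ℓ n, 2 ≤ cycleCount σ j)
      ≤ 1 / (2 * ((ℓ : ℝ) - 1)) := by
  classical
  have hn0 : 0 < n := by omega
  have hfact : (0:ℝ) < (n.factorial : ℝ) := by exact_mod_cast n.factorial_pos
  set E := fun σ : Equiv.Perm (Fin n) => ∃ j ∈ Finset.Icc ℓ n, 2 ≤ cycleCount σ j with hE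
  have hcard : (Nat.card {σ : Equiv.Perm (Fin n) // E σ} : ℝ)
      = ((Finset.univ.filter E).card : ℝ) := by
    congr 1
    rw [Nat.card_eq_fintype_card, Fintype.card_subtype]
  have hsplit : (Finset.univ.filter E).card ≤ ∑ j ∈ Finset.Icc ℓ n,
      (Finset.univ.filter (fun σ : Equiv.Perm (Fin n) => 2 ≤ cycleCount σ j)).card := by
    refine (Finset.card_le_card ?_).trans Finset.card_biUnion_le
    intro σ hσ
    rw [Finset.mem_filter] at hσ
    obtain ⟨-, j, hj1, hj2⟩ := hσ
    exact Finset.mem_biUnion.2 ⟨j, hj1, Finset.mem_filter.2 ⟨Finset.mem_univ _, hj2⟩⟩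
  have hterm : ∀ j ∈ Finset.Icc ℓ n,
      ((Finset.univ.filter (fun σ : Equiv.Perm (Fin n) => 2 ≤ cycleCount σ j)).card : ℝ)
        ≤ (n.factorial : ℝ) / (2 * (j:ℝ)^2) := by
    intro j hj
    rw [Finset.mem_Icc] at hj
    have hb := two_cycle_bound n j (by omega) hn0
    have hj0 : (0:ℝ) < 2*(j:ℝ)^2 := by
      have : (0:ℝ) < (j:ℝ) := by exact_mod_cast (by omega : 0 < j)
      positivity
    rw [le_div_iff₀ hj0]
    calc ((Finset.univ.filter (fun σ : Equiv.Perm (Fin n) =>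
            2 ≤ cycleCount σ j)).card : ℝ) * (2*(j:ℝ)^2)
        = ((2 * j^2 * (Finset.univ.filter (fun σ : Equiv.Perm (Fin n) =>
            2 ≤ cycleCount σ j)).card : ℕ) : ℝ) := by push_cast; ring
      _ ≤ (n.factorial : ℝ) := by exact_mod_cast hb
  have hmain : ((Finset.univ.filter E).card : ℝ)
      ≤ ∑ j ∈ Finset.Icc ℓ n, (n.factorial : ℝ) / (2 * (j:ℝ)^2) := by
    calc ((Finset.univ.filter E).card : ℝ)
        ≤ ((∑ j ∈ Finset.Icc ℓ n, (Finset.univ.filter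
            (fun σ : Equiv.Perm (Fin n) => 2 ≤ cycleCount σ j)).card : ℕ) : ℝ) := by
          exact_mod_cast hsplit
      _ = ∑ j ∈ Finset.Icc ℓ n, ((Finset.univ.filter
            (fun σ : Equiv.Perm (Fin n) => 2 ≤ cycleCount σ j)).card : ℝ) := by
          push_cast; rfl
      _ ≤ ∑ j ∈ Finset.Icc ℓ n, (n.factorial : ℝ) / (2 * (j:ℝ)^2) :=
          Finset.sum_le_sum hterm
  have hperm : permP n E ≤ ∑ j ∈ Finset.Icc ℓ n, (1:ℝ) / (2 * (j:ℝ)^2) := by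
    rw [permP, hcard]
    rw [div_le_iff₀ hfact]
    calc ((Finset.univ.filter E).card : ℝ)
        ≤ ∑ j ∈ Finset.Icc ℓ n, (n.factorial : ℝ) / (2 * (j:ℝ)^2) := hmain
      _ = (∑ j ∈ Finset.Icc ℓ n, (1:ℝ) / (2 * (j:ℝ)^2)) * (n.factorial : ℝ) := by
          rw [Finset.sum_mul]
          apply Finset.sum_congr rfl
          intro j hj
          rw [Finset.mem_Icc] at hj
          have : ((j:ℝ))^2 ≠ 0 := by
            have : (0:ℝ) < (j:ℝ) := by exact_mod_cast (by omega : 0 < j)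
            positivity
          field_simp
  refine hperm.trans ?_
  have hl1 : (1:ℝ) < (ℓ:ℝ) := by exact_mod_cast (by omega : 1 < ℓ)
  have hsum := sum_inv_sq_le ℓ h2 n
  calc ∑ j ∈ Finset.Icc ℓ n, (1:ℝ) / (2 * (j:ℝ)^2)
      = (∑ j ∈ Finset.Icc ℓ n, (1:ℝ) / (j:ℝ)^2) / 2 := by
        rw [Finset.sum_div]
        apply Finset.sum_congr rfl
        intro j hj
        rw [Finset.mem_Icc] at hj
        have : ((j:ℝ)) ≠ 0 := by
          have : (0:ℝ) < (j:ℝ) := by exact_mod_cast (by omega : 0 < j)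
          positivity
        field_simp
      _ ≤ (1/((ℓ:ℝ)-1)) / 2 := by linarith
      _ = 1 / (2 * ((ℓ:ℝ) - 1)) := by
        rw [div_div, mul_comm]
end
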